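/- arXiv:2102.00476 — 3 statements merged into one kernel-verified Lean document; each statement's English description precedes it below -/
import Mathlib

section
/- For every position P of Crossover-Mutation there exists a finite simple graph G such that the Arc Kayles position on G is equivalent to P: the Arc Kayles game on G has the same Grundy value as P (equivalently, the disjunctive sum of the two games is a second-player win under normal play). -/
/-- The minimum excludant of a set of naturals. -/
noncomputable def mex (S : Set ℕ) : ℕ := sInf {n : ℕ | n ∉ S}

/-- The entropy of a bit string: the number of adjacent pairs of unequal bits. -/
def entropy (b : List Bool) : ℕ := (b.zip b.tail).countP fun p => p.1 != p.2

/-- The legal moves of Crossover-Mutation: positions are pairs of bit strings of the same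
length `n`.  A crossover move chooses `k` with `1 ≤ k ≤ n-1` and swaps the length-`k`
prefixes of the two strings; a mutation move flips a single bit of either string.  A move is
legal only if it strictly increases the total entropy. -/
def cmMove (P P' : List Bool × List Bool) : Prop :=
  ((∃ k, 1 ≤ k ∧ k ≤ P.1.length - 1 ∧
      P'.1 = P.2.take k ++ P.1.drop k ∧ P'.2 = P.1.take k ++ P.2.drop k) ∨
   (∃ i, i < P.1.length ∧ P'.1 = P.1.set i (!(P.1.getD i false)) ∧ P'.2 = P.2) ∨
   (∃ i, i < P.2.length ∧ P'.1 = P.1 ∧ P'.2 = P.2.set i (!(P.2.getD i false)))) ∧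
  entropy P.1 + entropy P.2 < entropy P'.1 + entropy P'.2

/-- The moves of Arc Kayles on a simple graph: choose an edge `uv` and remove it together
with every edge sharing an endpoint with it. -/
def arcKaylesMove {V : Type} (G G' : SimpleGraph V) : Prop :=
  ∃ u v : V, G.Adj u v ∧
    ∀ x y : V, G'.Adj x y ↔ (G.Adj x y ∧ x ≠ u ∧ x ≠ v ∧ y ≠ u ∧ y ≠ v)

/-- result of an Arc Kayles move -/
def AKres {V : Type} (G : SimpleGraph V) (u v : V) : SimpleGraph V where
  Adj x y := G.Adj x y ∧ x ≠ u ∧ x ≠ v ∧ y ≠ u ∧ y ≠ v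
  symm := ⟨by rintro x y ⟨h, h1, h2, h3, h4⟩; exact ⟨h.symm, h3, h4, h1, h2⟩⟩
  loopless := ⟨by rintro x ⟨h, _⟩; exact G.irrefl h⟩

lemma akres_move {V : Type} {G : SimpleGraph V} {u v : V} (h : G.Adj u v) :
    arcKaylesMove G (AKres G u v) := ⟨u, v, h, fun _ _ => Iff.rfl⟩

lemma akMove_card_lt {m : ℕ} {G G' : SimpleGraph (Fin m)} (h : arcKaylesMove G G') :
    G'.edgeSet.ncard < G.edgeSet.ncard := by
  obtain ⟨u, v, hadj, hiff⟩ := h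
  have hsub : G'.edgeSet ⊂ G.edgeSet := by
    constructor
    · intro e he
      induction e with
      | h x y =>
        rw [SimpleGraph.mem_edgeSet] at he ⊢
        exact ((hiff x y).1 he).1
    · intro hcon
      have : s(u, v) ∈ G'.edgeSet := hcon (G.mem_edgeSet.2 hadj)
      rw [SimpleGraph.mem_edgeSet, hiff] at this
      exact this.2.1 rfl
  exact Set.ncard_lt_ncard hsub (Set.toFinite _)

/-- abstract bisimulation lemma -/
lemma bisim {m : ℕ}
    (gCM : List Bool × List Bool → ℕ)
    (hCM : ∀ P, gCM P = mex {x | ∃ P', cmMove P P' ∧ x = gCM P'})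
    (gAK : SimpleGraph (Fin m) → ℕ)
    (hAK : ∀ G, gAK G = mex {x | ∃ G', arcKaylesMove G G' ∧ x = gAK G'})
    (R : (List Bool × List Bool) → SimpleGraph (Fin m) → Prop)
    (hfwd : ∀ P G, R P G → ∀ P', cmMove P P' → ∃ G', arcKaylesMove G G' ∧ R P' G')
    (hbwd : ∀ P G, R P G → ∀ G', arcKaylesMove G G' → ∃ P', cmMove P P' ∧ R P' G') :
    ∀ P G, R P G → gCM P = gAK G := by
  suffices h : ∀ N P (G : SimpleGraph (Fin m)), G.edgeSet.ncard = N → R P G → gCM P = gAK G by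
    intro P G hR; exact h _ P G rfl hR
  intro N
  induction N using Nat.strong_induction_on with
  | _ N ih =>
    intro P G hN hR
    rw [hCM, hAK]
    congr 1
    ext x
    constructor
    · rintro ⟨P', hmv, rfl⟩
      obtain ⟨G', hmv', hR'⟩ := hfwd P G hR P' hmv
      have hlt := akMove_card_lt hmv'
      exact ⟨G', hmv', ih _ (hN ▸ hlt) P' G' rfl hR'⟩
    · rintro ⟨G', hmv', rfl⟩
      obtain ⟨P', hmv, hR'⟩ := hbwd P G hR G' hmv'
      have hlt := akMove_card_lt hmv'
      exact ⟨P', hmv, (ih _ (hN ▸ hlt) P' G' rfl hR').symm⟩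


/-- slot predicate for one string -/
def dsl (A : List Bool) (i : ℕ) : Bool := A.getD i false != A.getD (i+1) false
/-- column-difference predicate -/
def csl (A B : List Bool) (i : ℕ) : Bool := A.getD i false != B.getD i false

lemma countP_zip (p : Bool → Bool → Bool) : ∀ (l₁ l₂ : List Bool),
    (l₁.zip l₂).countP (fun q => p q.1 q.2) =
      ∑ i ∈ Finset.range (min l₁.length l₂.length),
        if p (l₁.getD i false) (l₂.getD i false) then 1 else 0 := by
  intro l₁
  induction l₁ with
  | nil => intro l₂; simp
  | cons a l ih =>
    intro l₂
    cases l₂ with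
    | nil => simp
    | cons b l₂ =>
      simp only [List.zip_cons_cons, List.countP_cons, List.length_cons]
      rw [ih l₂]
      have hm : min (l.length + 1) (l₂.length + 1) = min l.length l₂.length + 1 := by omega
      rw [hm, Finset.sum_range_succ']
      have h1 : ∑ i ∈ Finset.range (min l.length l₂.length),
          (if p ((a::l).getD (i+1) false) ((b::l₂).getD (i+1) false) = true then 1 else 0) =
          ∑ i ∈ Finset.range (min l.length l₂.length),
          (if p (l.getD i false) (l₂.getD i false) = true then 1 else 0) := by
        apply Finset.sum_congr rfl
        intro i _
        simp [List.getD_cons_succ]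
      rw [h1]
      simp [List.getD_cons_zero, Nat.add_comm]

lemma entropy_eq (A : List Bool) :
    entropy A = ∑ i ∈ Finset.range (A.length - 1), if dsl A i = true then 1 else 0 := by
  unfold entropy dsl
  rw [countP_zip (fun x y => x != y) A A.tail]
  cases A with
  | nil => simp
  | cons a l =>
    simp only [List.tail_cons, List.length_cons]
    have : min (l.length + 1) l.length = (l.length + 1) - 1 := by omega
    rw [this]
    apply Finset.sum_congr rfl
    intro i hi
    congr 1



lemma getD_set' (A : List Bool) (j i : ℕ) (hj : j < A.length) (bv : Bool) :
    (A.set j bv).getD i false = if i = j then bv else A.getD i false := by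
  simp only [List.getD_eq_getElem?_getD, List.getElem?_set]
  rcases eq_or_ne i j with h | h
  · subst h
    simp [hj]
  · simp [h, Ne.symm h]

lemma bnot_bne (x y : Bool) : ((!x) != y) = !(x != y) := by cases x <;> cases y <;> rfl
lemma bne_bnot (x y : Bool) : (x != (!y)) = !(x != y) := by cases x <;> cases y <;> rfl

lemma dsl_set (A : List Bool) (j : ℕ) (hj : j < A.length) (i : ℕ) :
    dsl (A.set j (!(A.getD j false))) i =
      if i = j ∨ i + 1 = j then !dsl A i else dsl A i := by
  unfold dsl
  rw [getD_set' A j i hj, getD_set' A j (i+1) hj]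
  rcases eq_or_ne i j with h1 | h1
  · have h2 : ¬ (i + 1 = j) := by omega
    subst h1
    simp [h2, bnot_bne]
  · rcases eq_or_ne (i+1) j with h2 | h2
    · subst h2
      simp [h1, bne_bnot]
    · simp [h1, h2]

lemma entropy_set_lt (A : List Bool) (j : ℕ) (hj : j < A.length) :
    (entropy A < entropy (A.set j (!(A.getD j false))) ↔
      (2 ≤ A.length ∧ ∀ i, (i = j ∨ i + 1 = j) → i < A.length - 1 → dsl A i = false)) := by
  set A' := A.set j (!(A.getD j false)) with hA'
  have hlen : A'.length = A.length := by simp [hA']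
  rw [entropy_eq, entropy_eq, hlen]
  set n := A.length with hn
  set f : ℕ → ℕ := fun i => if dsl A i = true then 1 else 0 with hf
  set f' : ℕ → ℕ := fun i => if dsl A' i = true then 1 else 0 with hf'
  set T : Finset ℕ := (Finset.range (n-1)).filter (fun i => i = j ∨ i + 1 = j) with hT
  have hsplit : ∀ g : ℕ → ℕ, ∑ i ∈ Finset.range (n-1), g i =
      (∑ i ∈ T, g i) + ∑ i ∈ (Finset.range (n-1)).filter (fun i => ¬(i = j ∨ i + 1 = j)), g i := by
    intro g
    rw [hT, Finset.sum_filter_add_sum_filter_not]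
  have hoff : ∀ i ∈ (Finset.range (n-1)).filter (fun i => ¬(i = j ∨ i + 1 = j)), f' i = f i := by
    intro i hi
    rw [Finset.mem_filter] at hi
    simp only [hf', hf]
    rw [dsl_set A j hj i, if_neg hi.2]
  have hflip : ∀ i ∈ T, f' i + f i = 1 := by
    intro i hi
    rw [hT, Finset.mem_filter] at hi
    simp only [hf', hf]
    rw [dsl_set A j hj i, if_pos hi.2]
    cases dsl A i <;> simp
  have hcardsum : (∑ i ∈ T, f' i) + (∑ i ∈ T, f i) = T.card := by
    rw [← Finset.sum_add_distrib]
    rw [Finset.sum_congr rfl hflip]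
    simp
  have hcard2 : T.card ≤ 2 := by
    have : T ⊆ {j, j - 1} := by
      intro i hi
      rw [hT, Finset.mem_filter] at hi
      rcases hi.2 with h | h <;> simp [h] <;> omega
    calc T.card ≤ ({j, j-1} : Finset ℕ).card := Finset.card_le_card this
      _ ≤ 2 := Finset.card_insert_le _ _ |>.trans (by simp)
  have hfle : (∑ i ∈ T, f i) ≤ T.card := by
    calc (∑ i ∈ T, f i) ≤ ∑ i ∈ T, 1 := by
          apply Finset.sum_le_sum; intro i _; simp only [hf]; split <;> omega
      _ = T.card := by simp
  rw [hsplit f, hsplit f']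
  have hoffsum : ∑ i ∈ (Finset.range (n-1)).filter (fun i => ¬(i = j ∨ i + 1 = j)), f' i =
      ∑ i ∈ (Finset.range (n-1)).filter (fun i => ¬(i = j ∨ i + 1 = j)), f i :=
    Finset.sum_congr rfl hoff
  rw [hoffsum]
  have key : ((∑ i ∈ T, f i) < (∑ i ∈ T, f' i)) ↔ ((∑ i ∈ T, f i) = 0 ∧ 0 < T.card) := by
    constructor <;> intro h <;> omega
  constructor
  · intro h
    have h2 : (∑ i ∈ T, f i) = 0 ∧ 0 < T.card := key.1 (by omega)
    constructor
    · rcases Finset.card_pos.1 h2.2 with ⟨i, hi⟩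
      rw [hT, Finset.mem_filter, Finset.mem_range] at hi
      omega
    · intro i hij hir
      have hiT : i ∈ T := by rw [hT, Finset.mem_filter, Finset.mem_range]; exact ⟨hir, hij⟩
      have := (Finset.sum_eq_zero_iff.1 h2.1) i hiT
      simp only [hf] at this
      rcases h' : dsl A i
      · rfl
      · rw [h'] at this; simp at this
  · rintro ⟨h2n, hall⟩
    have hz : (∑ i ∈ T, f i) = 0 := by
      apply Finset.sum_eq_zero
      intro i hi
      rw [hT, Finset.mem_filter, Finset.mem_range] at hi
      simp only [hf]
      rw [hall i hi.2 hi.1]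
      simp
    have hpos : 0 < T.card := by
      apply Finset.card_pos.2
      rcases Nat.lt_or_ge j (n-1) with h | h
      · exact ⟨j, by rw [hT, Finset.mem_filter, Finset.mem_range]; exact ⟨h, Or.inl rfl⟩⟩
      · refine ⟨j - 1, ?_⟩
        rw [hT, Finset.mem_filter, Finset.mem_range]
        constructor
        · omega
        · right; omega
    have := key.2 ⟨hz, hpos⟩
    omega
lemma length_cross (A B : List Bool) (k : ℕ) (hAB : A.length = B.length) (hk : k ≤ A.length) :
    (B.take k ++ A.drop k).length = A.length := by
  simp [List.length_append, List.length_take, List.length_drop]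
  omega

lemma getD_cross (A B : List Bool) (k i : ℕ) (hAB : A.length = B.length) (hk : k ≤ A.length) :
    (B.take k ++ A.drop k).getD i false = if i < k then B.getD i false else A.getD i false := by
  have hlt : (B.take k).length = k := by simp; omega
  rcases Nat.lt_or_ge i k with h | h
  · have h1 : i < (B.take k).length := by omega
    rw [if_pos h]
    simp only [List.getD_eq_getElem?_getD]
    rw [List.getElem?_append_left h1, List.getElem?_take_of_lt h]
  · have h2 : (B.take k).length ≤ i := by omega
    rw [if_neg (by omega)]
    simp only [List.getD_eq_getElem?_getD]
    rw [List.getElem?_append_right h2, List.getElem?_drop]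
    have h3 : k + (i - (B.take k).length) = i := by omega
    rw [h3]

lemma dsl_cross (A B : List Bool) (k i : ℕ) (hAB : A.length = B.length) (hk : k ≤ A.length) :
    dsl (B.take k ++ A.drop k) i =
      if i + 1 < k then dsl B i
      else if i + 1 = k then (B.getD i false != A.getD (i+1) false)
      else dsl A i := by
  unfold dsl
  rw [getD_cross A B k i hAB hk, getD_cross A B k (i+1) hAB hk]
  rcases Nat.lt_trichotomy (i+1) k with h | h | h
  · rw [if_pos h, if_pos (by omega), if_pos h]
  · rw [if_pos (by omega), if_neg (by omega), if_neg (by omega), if_pos h]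
  · rw [if_neg (by omega), if_neg (by omega), if_neg (by omega), if_neg (by omega)]

lemma csl_cross (A B : List Bool) (k i : ℕ) (hAB : A.length = B.length) (hk : k ≤ A.length) :
    csl (B.take k ++ A.drop k) (A.take k ++ B.drop k) i = csl A B i := by
  unfold csl
  rw [getD_cross A B k i hAB hk, getD_cross B A k i hAB.symm (by omega)]
  rcases Nat.lt_or_ge i k with h | h
  · rw [if_pos h, if_pos h]
    cases (A.getD i false) <;> cases (B.getD i false) <;> rfl
  · rw [if_neg (by omega), if_neg (by omega)]

lemma entropy_cross_lt (A B : List Bool) (k : ℕ) (hAB : A.length = B.length)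
    (hk1 : 1 ≤ k) (hk2 : k ≤ A.length - 1) :
    (entropy A + entropy B < entropy (B.take k ++ A.drop k) + entropy (A.take k ++ B.drop k) ↔
      (dsl A (k-1) = false ∧ dsl B (k-1) = false ∧ csl A B (k-1) = true)) := by
  set A' := B.take k ++ A.drop k with hA'
  set B' := A.take k ++ B.drop k with hB'
  have hk : k ≤ A.length := by omega
  have hlA : A'.length = A.length := length_cross A B k hAB hk
  have hlB : B'.length = A.length := by
    rw [hB', length_cross B A k hAB.symm (by omega)]; omega
  rw [entropy_eq A, entropy_eq B, entropy_eq A', entropy_eq B', hlA, hlB, ← hAB]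
  set n := A.length with hn
  have hmem : k - 1 ∈ Finset.range (n - 1) := by
    rw [Finset.mem_range]; omega
  rw [← Finset.add_sum_erase _ _ hmem, ← Finset.add_sum_erase _ (fun i => if dsl B i = true then 1 else 0) hmem,
      ← Finset.add_sum_erase _ (fun i => if dsl A' i = true then 1 else 0) hmem,
      ← Finset.add_sum_erase _ (fun i => if dsl B' i = true then 1 else 0) hmem]
  have hoffA : ∀ i ∈ (Finset.range (n-1)).erase (k-1),
      ((if dsl A' i = true then 1 else 0) + (if dsl B' i = true then 1 else 0) : ℕ) =
      (if dsl A i = true then 1 else 0) + (if dsl B i = true then 1 else 0) := by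
    intro i hi
    rw [Finset.mem_erase, Finset.mem_range] at hi
    rw [hA', hB', dsl_cross A B k i hAB hk, dsl_cross B A k i hAB.symm (by omega)]
    rcases Nat.lt_trichotomy (i+1) k with h | h | h
    · rw [if_pos h, if_pos h]; exact Nat.add_comm _ _
    · exfalso; omega
    · have h1 : ¬ (i + 1 < k) := by omega
      have h2 : ¬ (i + 1 = k) := by omega
      rw [if_neg h1, if_neg h2, if_neg h1, if_neg h2]
  have hsum : (∑ i ∈ (Finset.range (n-1)).erase (k-1), if dsl A' i = true then 1 else 0) +
      (∑ i ∈ (Finset.range (n-1)).erase (k-1), if dsl B' i = true then 1 else 0) =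
      (∑ i ∈ (Finset.range (n-1)).erase (k-1), if dsl A i = true then 1 else 0) +
      (∑ i ∈ (Finset.range (n-1)).erase (k-1), if dsl B i = true then 1 else 0) := by
    rw [← Finset.sum_add_distrib, ← Finset.sum_add_distrib]
    exact Finset.sum_congr rfl hoffA
  have hbA' : dsl A' (k-1) = (B.getD (k-1) false != A.getD k false) := by
    have h1 : ¬ (k - 1 + 1 < k) := by omega
    have h2 : k - 1 + 1 = k := by omega
    rw [hA', dsl_cross A B k (k-1) hAB hk, if_neg h1, if_pos h2, h2]
  have hbB' : dsl B' (k-1) = (A.getD (k-1) false != B.getD k false) := by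
    have h1 : ¬ (k - 1 + 1 < k) := by omega
    have h2 : k - 1 + 1 = k := by omega
    rw [hB', dsl_cross B A k (k-1) hAB.symm (by omega), if_neg h1, if_pos h2, h2]
  have hk12 : k - 1 + 1 = k := by omega
  have hdA : dsl A (k-1) = (A.getD (k-1) false != A.getD k false) := by
    unfold dsl; rw [hk12]
  have hdB : dsl B (k-1) = (B.getD (k-1) false != B.getD k false) := by
    unfold dsl; rw [hk12]
  have hcc : csl A B (k-1) = (A.getD (k-1) false != B.getD (k-1) false) := rfl
  rw [hbA', hbB', hdA, hdB, hcc]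
  have hred : ∀ (x y u v sa sb sa' sb' : ℕ), sa' + sb' = sa + sb →
      ((x + sa) + (y + sb) < (u + sa') + (v + sb') ↔ x + y < u + v) := by
    intro x y u v sa sb sa' sb' hs
    omega
  rw [hred _ _ _ _ _ _ _ _ hsum]
  generalize A.getD (k-1) false = a
  generalize A.getD k false = b
  generalize B.getD (k-1) false = p
  generalize B.getD k false = q
  revert a b p q
  decide
def slotRel (s : ℕ) (d e c : ℕ → Bool) (x y : ℕ) : Prop :=
  (x + 1 < s ∧ y = x + 1 ∧ d x = false ∧ d (x+1) = false) ∨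
  (s ≤ x ∧ x + 1 < 2*s ∧ y = x + 1 ∧ e (x - s) = false ∧ e (x + 1 - s) = false) ∨
  (x < s ∧ y = s + x ∧ d x = false ∧ e x = false ∧ c x = true) ∨
  (0 < s ∧ x = 2*s ∧ y = 0 ∧ d 0 = false) ∨
  (0 < s ∧ x = 2*s+1 ∧ y = s - 1 ∧ d (s-1) = false) ∨
  (0 < s ∧ x = 2*s+2 ∧ y = s ∧ e 0 = false) ∨
  (0 < s ∧ x = 2*s+3 ∧ y = s + (s-1) ∧ e (s-1) = false)

def HG (s : ℕ) (d e c : ℕ → Bool) : SimpleGraph (Fin (2*s+4)) :=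
  SimpleGraph.fromRel (fun a b => slotRel s d e c a.val b.val)

lemma HG_adj {s : ℕ} {d e c : ℕ → Bool} {a b : Fin (2*s+4)} :
    (HG s d e c).Adj a b ↔
      a ≠ b ∧ (slotRel s d e c a.val b.val ∨ slotRel s d e c b.val a.val) := by
  rw [HG, SimpleGraph.fromRel_adj]

lemma pend_nbr {s : ℕ} {d e c : ℕ → Bool} {a b : Fin (2*s+4)}
    (h : (HG s d e c).Adj a b) (ha : 2*s ≤ a.val) :
    (a.val = 2*s ∧ b.val = 0) ∨ (a.val = 2*s+1 ∧ b.val = s-1) ∨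
    (a.val = 2*s+2 ∧ b.val = s) ∨ (a.val = 2*s+3 ∧ b.val = s + (s-1)) := by
  rw [HG_adj] at h
  obtain ⟨hne, h | h⟩ := h <;>
    rcases h with ⟨h1,h2,h3⟩|⟨h1,h2,h3,h4⟩|⟨h1,h2,h3⟩|⟨h1,h2,h3⟩|⟨h1,h2,h3⟩|⟨h1,h2,h3⟩|⟨h1,h2,h3⟩ <;>
    omega

lemma kill_lemma {s : ℕ} {d e c d₂ e₂ c₂ : ℕ → Bool} {u v : Fin (2*s+4)}
    (hadj : (HG s d e c).Adj u v)
    (hd : ∀ j, j < s → (d₂ j = false ↔ (d j = false ∧ j ≠ u.val ∧ j ≠ v.val)))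
    (he : ∀ j, j < s → (e₂ j = false ↔ (e j = false ∧ s + j ≠ u.val ∧ s + j ≠ v.val)))
    (hc : ∀ j, j < s → d₂ j = false → e₂ j = false → c₂ j = c j) :
    ∀ x y : Fin (2*s+4), (AKres (HG s d e c) u v).Adj x y ↔ (HG s d₂ e₂ c₂).Adj x y := by
  have hpu := fun hle => pend_nbr hadj hle
  have hpv := fun hle => pend_nbr hadj.symm hle
  have key : ∀ xv yv : ℕ, slotRel s d₂ e₂ c₂ xv yv ↔
      (slotRel s d e c xv yv ∧ xv ≠ u.val ∧ xv ≠ v.val ∧ yv ≠ u.val ∧ yv ≠ v.val) := by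
    intro xv yv
    constructor
    · rintro (⟨h1,h2,h3,h4⟩|⟨h1,h2,h3,h4,h5⟩|⟨h1,h2,h3,h4,h5⟩|⟨h1,h2,h3,h4⟩|⟨h1,h2,h3,h4⟩|⟨h1,h2,h3,h4⟩|⟨h1,h2,h3,h4⟩)
      · obtain ⟨hd1, hx1, hx2⟩ := (hd xv (by omega)).1 h3
        obtain ⟨hd2, hy1, hy2⟩ := (hd (xv+1) (by omega)).1 h4
        exact ⟨Or.inl ⟨h1, h2, hd1, hd2⟩, hx1, hx2, by omega, by omega⟩
      · obtain ⟨he1, hx1, hx2⟩ := (he (xv - s) (by omega)).1 h4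
        obtain ⟨he2, hy1, hy2⟩ := (he (xv + 1 - s) (by omega)).1 h5
        refine ⟨Or.inr (Or.inl ⟨h1, h2, h3, he1, he2⟩), by omega, by omega, by omega, by omega⟩
      · obtain ⟨hd1, hx1, hx2⟩ := (hd xv (by omega)).1 h3
        obtain ⟨he1, hy1, hy2⟩ := (he xv (by omega)).1 h4
        have hcx := hc xv (by omega) h3 h4
        refine ⟨Or.inr (Or.inr (Or.inl ⟨h1, h2, hd1, he1, hcx ▸ h5⟩)), hx1, hx2, by omega, by omega⟩
      · obtain ⟨hd1, h01, h02⟩ := (hd 0 (by omega)).1 h4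
        refine ⟨Or.inr (Or.inr (Or.inr (Or.inl ⟨h1, h2, h3, hd1⟩))), ?_, ?_, by omega, by omega⟩
        · intro hx
          rcases hpu (by omega) with ⟨e1,e2⟩|⟨e1,e2⟩|⟨e1,e2⟩|⟨e1,e2⟩ <;> omega
        · intro hx
          rcases hpv (by omega) with ⟨e1,e2⟩|⟨e1,e2⟩|⟨e1,e2⟩|⟨e1,e2⟩ <;> omega
      · obtain ⟨hd1, h01, h02⟩ := (hd (s-1) (by omega)).1 h4
        refine ⟨Or.inr (Or.inr (Or.inr (Or.inr (Or.inl ⟨h1, h2, h3, hd1⟩)))), ?_, ?_, by omega, by omega⟩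
        · intro hx
          rcases hpu (by omega) with ⟨e1,e2⟩|⟨e1,e2⟩|⟨e1,e2⟩|⟨e1,e2⟩ <;> omega
        · intro hx
          rcases hpv (by omega) with ⟨e1,e2⟩|⟨e1,e2⟩|⟨e1,e2⟩|⟨e1,e2⟩ <;> omega
      · obtain ⟨he1, h01, h02⟩ := (he 0 (by omega)).1 h4
        refine ⟨Or.inr (Or.inr (Or.inr (Or.inr (Or.inr (Or.inl ⟨h1, h2, h3, he1⟩))))), ?_, ?_, by omega, by omega⟩
        · intro hx
          rcases hpu (by omega) with ⟨e1,e2⟩|⟨e1,e2⟩|⟨e1,e2⟩|⟨e1,e2⟩ <;> omega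
        · intro hx
          rcases hpv (by omega) with ⟨e1,e2⟩|⟨e1,e2⟩|⟨e1,e2⟩|⟨e1,e2⟩ <;> omega
      · obtain ⟨he1, h01, h02⟩ := (he (s-1) (by omega)).1 h4
        refine ⟨Or.inr (Or.inr (Or.inr (Or.inr (Or.inr (Or.inr ⟨h1, h2, h3, he1⟩))))), ?_, ?_, by omega, by omega⟩
        · intro hx
          rcases hpu (by omega) with ⟨e1,e2⟩|⟨e1,e2⟩|⟨e1,e2⟩|⟨e1,e2⟩ <;> omega
        · intro hx
          rcases hpv (by omega) with ⟨e1,e2⟩|⟨e1,e2⟩|⟨e1,e2⟩|⟨e1,e2⟩ <;> omega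
    · rintro ⟨(⟨h1,h2,h3,h4⟩|⟨h1,h2,h3,h4,h5⟩|⟨h1,h2,h3,h4,h5⟩|⟨h1,h2,h3,h4⟩|⟨h1,h2,h3,h4⟩|⟨h1,h2,h3,h4⟩|⟨h1,h2,h3,h4⟩), hx1, hx2, hy1, hy2⟩
      · exact Or.inl ⟨h1, h2, (hd xv (by omega)).2 ⟨h3, hx1, hx2⟩,
          (hd (xv+1) (by omega)).2 ⟨h4, by omega, by omega⟩⟩
      · exact Or.inr (Or.inl ⟨h1, h2, h3,
          (he (xv - s) (by omega)).2 ⟨h4, by omega, by omega⟩,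
          (he (xv + 1 - s) (by omega)).2 ⟨h5, by omega, by omega⟩⟩)
      · have hd2 := (hd xv (by omega)).2 ⟨h3, hx1, hx2⟩
        have he2 := (he xv (by omega)).2 ⟨h4, by omega, by omega⟩
        exact Or.inr (Or.inr (Or.inl ⟨h1, h2, hd2, he2,
          (hc xv (by omega) hd2 he2) ▸ h5⟩))
      · exact Or.inr (Or.inr (Or.inr (Or.inl ⟨h1, h2, h3,
          (hd 0 (by omega)).2 ⟨h4, by omega, by omega⟩⟩)))
      · exact Or.inr (Or.inr (Or.inr (Or.inr (Or.inl ⟨h1, h2, h3,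
          (hd (s-1) (by omega)).2 ⟨h4, by omega, by omega⟩⟩))))
      · exact Or.inr (Or.inr (Or.inr (Or.inr (Or.inr (Or.inl ⟨h1, h2, h3,
          (he 0 (by omega)).2 ⟨h4, by omega, by omega⟩⟩)))))
      · exact Or.inr (Or.inr (Or.inr (Or.inr (Or.inr (Or.inr ⟨h1, h2, h3,
          (he (s-1) (by omega)).2 ⟨h4, by omega, by omega⟩⟩)))))
  intro x y
  show ((HG s d e c).Adj x y ∧ x ≠ u ∧ x ≠ v ∧ y ≠ u ∧ y ≠ v) ↔ _
  rw [HG_adj, HG_adj]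
  have hval : ∀ (p q : Fin (2*s+4)), p ≠ q ↔ p.val ≠ q.val := by
    intro p q
    constructor
    · intro h hc2; exact h (Fin.ext hc2)
    · intro h hc2; exact h (by rw [hc2])
  rw [hval x u, hval x v, hval y u, hval y v]
  rw [key x.val y.val, key y.val x.val]
  constructor
  · rintro ⟨⟨hne, hrel | hrel⟩, e1, e2, e3, e4⟩
    · exact ⟨hne, Or.inl ⟨hrel, e1, e2, e3, e4⟩⟩
    · exact ⟨hne, Or.inr ⟨hrel, e3, e4, e1, e2⟩⟩
  · rintro ⟨hne, ⟨hrel, e1, e2, e3, e4⟩ | ⟨hrel, e1, e2, e3, e4⟩⟩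
    · exact ⟨⟨hne, Or.inl hrel⟩, e1, e2, e3, e4⟩
    · exact ⟨⟨hne, Or.inr hrel⟩, e3, e4, e1, e2⟩
def fsw (s i x : ℕ) : ℕ :=
  if x < i then x + s
  else if s ≤ x ∧ x < s + i then x - s
  else if x = 2*s then 2*s+2
  else if x = 2*s+2 then 2*s
  else x

lemma fsw_invol {s i : ℕ} (hi : i ≤ s) (x : ℕ) : fsw s i (fsw s i x) = x := by
  unfold fsw
  split_ifs <;> omega

lemma fsw_lt {s i : ℕ} (hi : i ≤ s) {x : ℕ} (hx : x < 2*s+4) : fsw s i x < 2*s+4 := by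
  unfold fsw
  split_ifs <;> omega

def gsw (s i : ℕ) (hi : i ≤ s) : Equiv.Perm (Fin (2*s+4)) where
  toFun x := ⟨fsw s i x.val, fsw_lt hi x.isLt⟩
  invFun x := ⟨fsw s i x.val, fsw_lt hi x.isLt⟩
  left_inv x := by
    apply Fin.ext
    exact fsw_invol hi x.val
  right_inv x := by
    apply Fin.ext
    exact fsw_invol hi x.val

lemma rel_swap {s i : ℕ} {d e c d' e' c' : ℕ → Bool} (hi : i < s)
    (hdi : d i = true) (hei : e i = true)
    (h1 : ∀ j, j < i → d' j = e j) (h2 : ∀ j, j < i → e' j = d j)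
    (h3 : ∀ j, i ≤ j → j < s → d' j = d j) (h4 : ∀ j, i ≤ j → j < s → e' j = e j)
    (h5 : ∀ j, j < s → c' j = c j) :
    ∀ x y, slotRel s d e c x y →
      slotRel s d' e' c' (fsw s i x) (fsw s i y) ∨ slotRel s d' e' c' (fsw s i y) (fsw s i x) := by
  intro x y hrel
  rcases hrel with ⟨g1,g2,g3,g4⟩|⟨g1,g2,g3,g4,g5⟩|⟨g1,g2,g3,g4,g5⟩|⟨g1,g2,g3,g4⟩|⟨g1,g2,g3,g4⟩|⟨g1,g2,g3,g4⟩|⟨g1,g2,g3,g4⟩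
  · -- uu edge (x, x+1)
    subst g2
    rcases Nat.lt_trichotomy (x+1) i with h | h | h
    · have hfx : fsw s i x = x + s := by unfold fsw; rw [if_pos (by omega)]
      have hfy : fsw s i (x+1) = x + 1 + s := by unfold fsw; rw [if_pos (by omega)]
      rw [hfx, hfy]
      left; right; left
      refine ⟨by omega, by omega, by omega, ?_, ?_⟩
      · have : x + s - s = x := by omega
        rw [this, h2 x (by omega)]; exact g3
      · have : x + s + 1 - s = x + 1 := by omega
        rw [this, h2 (x+1) (by omega)]; exact g4
    · exfalso; rw [← h] at hdi; rw [g4] at hdi; exact Bool.false_ne_true hdi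
    · rcases Nat.lt_or_ge x i with h' | h'
      · exfalso
        have : x = i := by omega
        rw [← this] at hdi; rw [g3] at hdi; exact Bool.false_ne_true hdi
      · have hfx : fsw s i x = x := by unfold fsw; split_ifs <;> omega
        have hfy : fsw s i (x+1) = x + 1 := by unfold fsw; split_ifs <;> omega
        rw [hfx, hfy]
        left; left
        refine ⟨g1, rfl, ?_, ?_⟩
        · rw [h3 x h' (by omega)]; exact g3
        · rw [h3 (x+1) (by omega) (by omega)]; exact g4
  · -- vv edge (x, x+1), x = s + j
    subst g3
    rcases Nat.lt_trichotomy (x + 1 - s) i with h | h | h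
    · have hfx : fsw s i x = x - s := by unfold fsw; rw [if_neg (by omega), if_pos (by omega)]
      have hfy : fsw s i (x+1) = x + 1 - s := by unfold fsw; rw [if_neg (by omega), if_pos (by omega)]
      rw [hfx, hfy]
      left; left
      refine ⟨by omega, by omega, ?_, ?_⟩
      · rw [h1 (x - s) (by omega)]; exact g4
      · have : x - s + 1 = x + 1 - s := by omega
        rw [this, h1 (x + 1 - s) (by omega)]; exact g5
    · exfalso; rw [← h] at hei; rw [g5] at hei; exact Bool.false_ne_true hei
    · rcases Nat.lt_or_ge (x - s) i with h' | h'
      · exfalso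
        have : x - s = i := by omega
        rw [← this] at hei; rw [g4] at hei; exact Bool.false_ne_true hei
      · have hfx : fsw s i x = x := by unfold fsw; split_ifs <;> omega
        have hfy : fsw s i (x+1) = x + 1 := by unfold fsw; split_ifs <;> omega
        rw [hfx, hfy]
        left; right; left
        refine ⟨g1, g2, rfl, ?_, ?_⟩
        · rw [h4 (x - s) h' (by omega)]; exact g4
        · rw [h4 (x + 1 - s) (by omega) (by omega)]; exact g5
  · -- rung (x, s + x)
    subst g2
    rcases Nat.lt_trichotomy x i with h | h | h
    · have hfx : fsw s i x = x + s := by unfold fsw; rw [if_pos h]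
      have hfy : fsw s i (s+x) = x := by unfold fsw; rw [if_neg (by omega), if_pos (by omega)]; omega
      rw [hfx, hfy]
      right; right; right; left
      refine ⟨g1, by omega, ?_, ?_, ?_⟩
      · rw [h1 x h]; exact g4
      · rw [h2 x h]; exact g3
      · rw [h5 x g1]; exact g5
    · exfalso; rw [← h] at hdi; rw [g3] at hdi; exact Bool.false_ne_true hdi
    · have hfx : fsw s i x = x := by unfold fsw; split_ifs <;> omega
      have hfy : fsw s i (s+x) = s + x := by unfold fsw; split_ifs <;> omega
      rw [hfx, hfy]
      left; right; right; left
      refine ⟨g1, rfl, ?_, ?_, ?_⟩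
      · rw [h3 x (by omega) g1]; exact g3
      · rw [h4 x (by omega) g1]; exact g4
      · rw [h5 x g1]; exact g5
  · -- pendant (2s, 0)
    subst g2; subst g3
    rcases Nat.eq_or_lt_of_le (Nat.zero_le i) with h | h
    · exfalso; rw [← h] at hdi; rw [g4] at hdi; exact Bool.false_ne_true hdi
    · have hfx : fsw s i (2*s) = 2*s+2 := by unfold fsw; rw [if_neg (by omega), if_neg (by omega), if_pos rfl]
      have hfy : fsw s i 0 = s := by unfold fsw; rw [if_pos h]; omega
      rw [hfx, hfy]
      left; right; right; right; right; right; left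
      refine ⟨g1, rfl, rfl, ?_⟩
      rw [h2 0 h]; exact g4
  · -- pendant (2s+1, s-1)
    subst g2; subst g3
    rcases Nat.lt_trichotomy (s-1) i with h | h | h
    · exfalso; omega
    · exfalso; rw [← h] at hdi; rw [g4] at hdi; exact Bool.false_ne_true hdi
    · have hfx : fsw s i (2*s+1) = 2*s+1 := by unfold fsw; split_ifs <;> omega
      have hfy : fsw s i (s-1) = s-1 := by unfold fsw; split_ifs <;> omega
      rw [hfx, hfy]
      left; right; right; right; right; left
      refine ⟨g1, rfl, rfl, ?_⟩
      rw [h3 (s-1) (by omega) (by omega)]; exact g4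
  · -- pendant (2s+2, s)
    subst g2
    rcases Nat.eq_or_lt_of_le (Nat.zero_le i) with h | h
    · exfalso; rw [← h] at hei; rw [g4] at hei; exact Bool.false_ne_true hei
    · have hfx : fsw s i (2*s+2) = 2*s := by unfold fsw; rw [if_neg (by omega), if_neg (by omega), if_neg (by omega), if_pos rfl]
      have hfy : fsw s i y = 0 := by rw [g3]; unfold fsw; rw [if_neg (by omega), if_pos (by omega)]; omega
      rw [hfx, hfy]
      left; right; right; right; left
      refine ⟨g1, rfl, rfl, ?_⟩
      rw [h1 0 h]; exact g4
  · -- pendant (2s+3, s+(s-1))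
    subst g2; subst g3
    rcases Nat.lt_trichotomy (s-1) i with h | h | h
    · exfalso; omega
    · exfalso; rw [← h] at hei; rw [g4] at hei; exact Bool.false_ne_true hei
    · have hfx : fsw s i (2*s+3) = 2*s+3 := by unfold fsw; split_ifs <;> omega
      have hfy : fsw s i (s+(s-1)) = s+(s-1) := by unfold fsw; split_ifs <;> omega
      rw [hfx, hfy]
      left; right; right; right; right; right; right
      refine ⟨g1, rfl, rfl, ?_⟩
      rw [h4 (s-1) (by omega) (by omega)]; exact g4

lemma swap_lemma {s i : ℕ} {d e c d' e' c' : ℕ → Bool} (hi : i < s)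
    (hdi : d i = true) (hei : e i = true)
    (h1 : ∀ j, j < i → d' j = e j) (h2 : ∀ j, j < i → e' j = d j)
    (h3 : ∀ j, i ≤ j → j < s → d' j = d j) (h4 : ∀ j, i ≤ j → j < s → e' j = e j)
    (h5 : ∀ j, j < s → c' j = c j) :
    ∀ x y : Fin (2*s+4), (HG s d e c).Adj x y ↔
      (HG s d' e' c').Adj (gsw s i (le_of_lt hi) x) (gsw s i (le_of_lt hi) y) := by
  have hile := le_of_lt hi
  intro x y
  rw [HG_adj, HG_adj]
  have hgval : ∀ z : Fin (2*s+4), ((gsw s i hile) z).val = fsw s i z.val := fun z => rfl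
  constructor
  · rintro ⟨hne, hrel | hrel⟩
    · refine ⟨fun hcon => hne (by
        have := congrArg Fin.val hcon
        rw [hgval, hgval] at this
        have h2' := congrArg (fsw s i) this
        rw [fsw_invol hile, fsw_invol hile] at h2'
        exact Fin.ext h2'), ?_⟩
      rw [hgval, hgval]
      exact rel_swap hi hdi hei h1 h2 h3 h4 h5 x.val y.val hrel
    · refine ⟨fun hcon => hne (by
        have := congrArg Fin.val hcon
        rw [hgval, hgval] at this
        have h2' := congrArg (fsw s i) this
        rw [fsw_invol hile, fsw_invol hile] at h2'
        exact Fin.ext h2'), ?_⟩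
      rw [hgval, hgval]
      exact (rel_swap hi hdi hei h1 h2 h3 h4 h5 y.val x.val hrel).symm
  · rintro ⟨hne, hrel | hrel⟩
    · have hd'i : d' i = true := by rw [h3 i le_rfl hi]; exact hdi
      have he'i : e' i = true := by rw [h4 i le_rfl hi]; exact hei
      have hback := rel_swap hi hd'i he'i
        (fun j hj => (h2 j hj).symm) (fun j hj => (h1 j hj).symm)
        (fun j hj1 hj2 => (h3 j hj1 hj2).symm) (fun j hj1 hj2 => (h4 j hj1 hj2).symm)
        (fun j hj => (h5 j hj).symm)
        (fsw s i x.val) (fsw s i y.val) hrel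
      rw [fsw_invol hile, fsw_invol hile] at hback
      exact ⟨fun hcon => hne (by rw [hcon]), hback⟩
    · have hd'i : d' i = true := by rw [h3 i le_rfl hi]; exact hdi
      have he'i : e' i = true := by rw [h4 i le_rfl hi]; exact hei
      have hback := rel_swap hi hd'i he'i
        (fun j hj => (h2 j hj).symm) (fun j hj => (h1 j hj).symm)
        (fun j hj1 hj2 => (h3 j hj1 hj2).symm) (fun j hj1 hj2 => (h4 j hj1 hj2).symm)
        (fun j hj => (h5 j hj).symm)
        (fsw s i y.val) (fsw s i x.val) hrel
      rw [fsw_invol hile, fsw_invol hile] at hback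
      exact ⟨fun hcon => hne (by rw [hcon]), hback.symm⟩
lemma bne_comm' (x y : Bool) : (x != y) = (y != x) := by cases x <;> cases y <;> rfl

lemma csl_setA (A B : List Bool) (j : ℕ) (hj : j < A.length) (bv : Bool) :
    ∀ i, i ≠ j → csl (A.set j bv) B i = csl A B i := by
  intro i hij
  unfold csl
  rw [getD_set' A j i hj, if_neg hij]

lemma csl_setB (A B : List Bool) (j : ℕ) (hj : j < B.length) (bv : Bool) :
    ∀ i, i ≠ j → csl A (B.set j bv) i = csl A B i := by
  intro i hij
  unfold csl
  rw [getD_set' B j i hj, if_neg hij]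

/-- the killed-slot characterisation for a mutation -/
lemma hd_mut (A : List Bool) (j : ℕ) (hj : j < A.length)
    (hslots : ∀ i, (i = j ∨ i + 1 = j) → i < A.length - 1 → dsl A i = false) :
    ∀ jj, jj < A.length - 1 → (dsl (A.set j (!(A.getD j false))) jj = false ↔
      (dsl A jj = false ∧ ¬(jj = j ∨ jj + 1 = j))) := by
  intro jj hjj
  rw [dsl_set A j hj jj]
  split_ifs with h
  · rw [hslots jj h hjj]
    simp [h]
  · simp [h]

lemma dsl_killed (A : List Bool) (j : ℕ) (hj : j < A.length) (jj : ℕ)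
    (hk : jj = j ∨ jj + 1 = j) (h0 : dsl A jj = false) :
    dsl (A.set j (!(A.getD j false))) jj = true := by
  rw [dsl_set A j hj jj, if_pos hk, h0]
  rfl
lemma pack_mutA_mid (A B : List Bool) (j : ℕ)
    (h1 : 1 ≤ j) (h2 : j + 1 ≤ A.length - 1)
    (hs1 : dsl A (j-1) = false) (hs2 : dsl A j = false) :
    cmMove (A, B) (A.set j (!(A.getD j false)), B) ∧
    (HG (A.length-1) (dsl A) (dsl B) (csl A B)).Adj ⟨j-1, by omega⟩ ⟨j, by omega⟩ ∧
    (∀ x y, (AKres (HG (A.length-1) (dsl A) (dsl B) (csl A B)) ⟨j-1, by omega⟩ ⟨j, by omega⟩).Adj x y ↔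
      (HG (A.length-1) (dsl (A.set j (!(A.getD j false)))) (dsl B)
        (csl (A.set j (!(A.getD j false))) B)).Adj x y) := by
  have hj : j < A.length := by omega
  have hn2 : 2 ≤ A.length := by omega
  have hslots : ∀ i, (i = j ∨ i + 1 = j) → i < A.length - 1 → dsl A i = false := by
    intro i hi _
    rcases hi with rfl | hi
    · exact hs2
    · have : i = j - 1 := by omega
      rw [this]; exact hs1
  have hadj : (HG (A.length-1) (dsl A) (dsl B) (csl A B)).Adj ⟨j-1, by omega⟩ ⟨j, by omega⟩ := by
    rw [HG_adj]
    constructor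
    · intro hcon
      have : j - 1 = j := congrArg Fin.val hcon
      omega
    · refine Or.inl (Or.inl ⟨?_, ?_, ?_, ?_⟩)
      · show j - 1 + 1 < A.length - 1
        omega
      · show (j : ℕ) = j - 1 + 1
        omega
      · show dsl A (j-1) = false; exact hs1
      · show dsl A (j-1+1) = false
        have : j - 1 + 1 = j := by omega
        rw [this]; exact hs2
  refine ⟨⟨Or.inr (Or.inl ⟨j, hj, rfl, rfl⟩), ?_⟩, hadj, ?_⟩
  · show entropy A + entropy B < entropy (A.set j (!(A.getD j false))) + entropy B
    have := (entropy_set_lt A j hj).2 ⟨hn2, hslots⟩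
    omega
  · apply kill_lemma hadj
    · intro jj hjj
      rw [hd_mut A j hj hslots jj hjj]
      show _ ↔ _ ∧ jj ≠ j - 1 ∧ jj ≠ j
      constructor
      · rintro ⟨q1, q2⟩; exact ⟨q1, by omega, by omega⟩
      · rintro ⟨q1, q2, q3⟩; exact ⟨q1, by omega⟩
    · intro jj hjj
      show _ ↔ _ ∧ (A.length - 1) + jj ≠ j - 1 ∧ (A.length - 1) + jj ≠ j
      constructor
      · intro q; exact ⟨q, by omega, by omega⟩
      · rintro ⟨q, _, _⟩; exact q
    · intro jj hjj hd2 _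
      rcases eq_or_ne jj j with rfl | hne
      · rw [dsl_killed A jj hj jj (Or.inl rfl) hs2] at hd2
        exact absurd hd2 (by simp)
      · exact csl_setA A B j hj _ jj hne

lemma pack_mutA_0 (A B : List Bool) (hn2 : 2 ≤ A.length) (hs : dsl A 0 = false) :
    cmMove (A, B) (A.set 0 (!(A.getD 0 false)), B) ∧
    (HG (A.length-1) (dsl A) (dsl B) (csl A B)).Adj ⟨2*(A.length-1), by omega⟩ ⟨0, by omega⟩ ∧
    (∀ x y, (AKres (HG (A.length-1) (dsl A) (dsl B) (csl A B)) ⟨2*(A.length-1), by omega⟩ ⟨0, by omega⟩).Adj x y ↔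
      (HG (A.length-1) (dsl (A.set 0 (!(A.getD 0 false)))) (dsl B)
        (csl (A.set 0 (!(A.getD 0 false))) B)).Adj x y) := by
  have hj : 0 < A.length := by omega
  have hslots : ∀ i, (i = 0 ∨ i + 1 = 0) → i < A.length - 1 → dsl A i = false := by
    intro i hi _
    rcases hi with rfl | hi
    · exact hs
    · omega
  have hadj : (HG (A.length-1) (dsl A) (dsl B) (csl A B)).Adj ⟨2*(A.length-1), by omega⟩ ⟨0, by omega⟩ := by
    rw [HG_adj]
    constructor
    · intro hcon
      have : 2*(A.length-1) = 0 := congrArg Fin.val hcon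
      omega
    · exact Or.inl (Or.inr (Or.inr (Or.inr (Or.inl ⟨by omega, rfl, rfl, hs⟩))))
  refine ⟨⟨Or.inr (Or.inl ⟨0, hj, rfl, rfl⟩), ?_⟩, hadj, ?_⟩
  · show entropy A + entropy B < entropy (A.set 0 (!(A.getD 0 false))) + entropy B
    have := (entropy_set_lt A 0 hj).2 ⟨hn2, hslots⟩
    omega
  · apply kill_lemma hadj
    · intro jj hjj
      rw [hd_mut A 0 hj hslots jj hjj]
      show _ ↔ _ ∧ jj ≠ 2*(A.length-1) ∧ jj ≠ 0
      constructor
      · rintro ⟨q1, q2⟩; exact ⟨q1, by omega, by omega⟩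
      · rintro ⟨q1, q2, q3⟩; exact ⟨q1, by omega⟩
    · intro jj hjj
      show _ ↔ _ ∧ (A.length - 1) + jj ≠ 2*(A.length-1) ∧ (A.length - 1) + jj ≠ 0
      constructor
      · intro q; exact ⟨q, by omega, by omega⟩
      · rintro ⟨q, _, _⟩; exact q
    · intro jj hjj hd2 _
      rcases eq_or_ne jj 0 with rfl | hne
      · rw [dsl_killed A 0 hj 0 (Or.inl rfl) hs] at hd2
        exact absurd hd2 (by simp)
      · exact csl_setA A B 0 hj _ jj hne

lemma pack_mutA_end (A B : List Bool) (hn2 : 2 ≤ A.length) (hs : dsl A (A.length - 2) = false) :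
    cmMove (A, B) (A.set (A.length - 1) (!(A.getD (A.length - 1) false)), B) ∧
    (HG (A.length-1) (dsl A) (dsl B) (csl A B)).Adj ⟨2*(A.length-1)+1, by omega⟩ ⟨A.length - 2, by omega⟩ ∧
    (∀ x y, (AKres (HG (A.length-1) (dsl A) (dsl B) (csl A B)) ⟨2*(A.length-1)+1, by omega⟩ ⟨A.length - 2, by omega⟩).Adj x y ↔
      (HG (A.length-1) (dsl (A.set (A.length - 1) (!(A.getD (A.length - 1) false)))) (dsl B)
        (csl (A.set (A.length - 1) (!(A.getD (A.length - 1) false))) B)).Adj x y) := by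
  have hj : A.length - 1 < A.length := by omega
  have hslots : ∀ i, (i = A.length - 1 ∨ i + 1 = A.length - 1) → i < A.length - 1 → dsl A i = false := by
    intro i hi hir
    rcases hi with rfl | hi
    · omega
    · have : i = A.length - 2 := by omega
      rw [this]; exact hs
  have hadj : (HG (A.length-1) (dsl A) (dsl B) (csl A B)).Adj ⟨2*(A.length-1)+1, by omega⟩ ⟨A.length - 2, by omega⟩ := by
    rw [HG_adj]
    constructor
    · intro hcon
      have : 2*(A.length-1)+1 = A.length - 2 := congrArg Fin.val hcon
      omega
    · refine Or.inl (Or.inr (Or.inr (Or.inr (Or.inr (Or.inl ⟨by omega, rfl, ?_, ?_⟩)))))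
      · show (A.length - 2 : ℕ) = A.length - 1 - 1
        omega
      · show dsl A (A.length - 1 - 1) = false
        have : A.length - 1 - 1 = A.length - 2 := by omega
        rw [this]; exact hs
  refine ⟨⟨Or.inr (Or.inl ⟨A.length - 1, hj, rfl, rfl⟩), ?_⟩, hadj, ?_⟩
  · show entropy A + entropy B < entropy (A.set (A.length - 1) (!(A.getD (A.length - 1) false))) + entropy B
    have := (entropy_set_lt A (A.length - 1) hj).2 ⟨hn2, hslots⟩
    omega
  · apply kill_lemma hadj
    · intro jj hjj
      rw [hd_mut A (A.length - 1) hj hslots jj hjj]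
      show _ ↔ _ ∧ jj ≠ 2*(A.length-1)+1 ∧ jj ≠ A.length - 2
      constructor
      · rintro ⟨q1, q2⟩; exact ⟨q1, by omega, by omega⟩
      · rintro ⟨q1, q2, q3⟩; exact ⟨q1, by omega⟩
    · intro jj hjj
      show _ ↔ _ ∧ (A.length - 1) + jj ≠ 2*(A.length-1)+1 ∧ (A.length - 1) + jj ≠ A.length - 2
      constructor
      · intro q; exact ⟨q, by omega, by omega⟩
      · rintro ⟨q, _, _⟩; exact q
    · intro jj hjj hd2 _
      exact csl_setA A B (A.length - 1) hj _ jj (by omega)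
lemma pack_mutB_mid (A B : List Bool) (hAB : A.length = B.length) (j : ℕ)
    (h1 : 1 ≤ j) (h2 : j + 1 ≤ A.length - 1)
    (hs1 : dsl B (j-1) = false) (hs2 : dsl B j = false) :
    cmMove (A, B) (A, B.set j (!(B.getD j false))) ∧
    (HG (A.length-1) (dsl A) (dsl B) (csl A B)).Adj
      ⟨(A.length-1)+(j-1), by omega⟩ ⟨(A.length-1)+j, by omega⟩ ∧
    (∀ x y, (AKres (HG (A.length-1) (dsl A) (dsl B) (csl A B))
        ⟨(A.length-1)+(j-1), by omega⟩ ⟨(A.length-1)+j, by omega⟩).Adj x y ↔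
      (HG (A.length-1) (dsl A) (dsl (B.set j (!(B.getD j false))))
        (csl A (B.set j (!(B.getD j false))))).Adj x y) := by
  have hj : j < B.length := by omega
  have hn2 : 2 ≤ B.length := by omega
  have hslots : ∀ i, (i = j ∨ i + 1 = j) → i < B.length - 1 → dsl B i = false := by
    intro i hi _
    rcases hi with rfl | hi
    · exact hs2
    · have : i = j - 1 := by omega
      rw [this]; exact hs1
  have hadj : (HG (A.length-1) (dsl A) (dsl B) (csl A B)).Adj
      ⟨(A.length-1)+(j-1), by omega⟩ ⟨(A.length-1)+j, by omega⟩ := by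
    rw [HG_adj]
    constructor
    · intro hcon
      have : (A.length-1)+(j-1) = (A.length-1)+j := congrArg Fin.val hcon
      omega
    · refine Or.inl (Or.inr (Or.inl ⟨?_, ?_, ?_, ?_, ?_⟩))
      · show A.length - 1 ≤ (A.length-1)+(j-1)
        omega
      · show (A.length-1)+(j-1) + 1 < 2*(A.length-1)
        omega
      · show (A.length-1)+j = (A.length-1)+(j-1) + 1
        omega
      · show dsl B ((A.length-1)+(j-1) - (A.length-1)) = false
        have : (A.length-1)+(j-1) - (A.length-1) = j - 1 := by omega
        rw [this]; exact hs1
      · show dsl B ((A.length-1)+(j-1) + 1 - (A.length-1)) = false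
        have : (A.length-1)+(j-1) + 1 - (A.length-1) = j := by omega
        rw [this]; exact hs2
  refine ⟨⟨Or.inr (Or.inr ⟨j, hj, rfl, rfl⟩), ?_⟩, hadj, ?_⟩
  · show entropy A + entropy B < entropy A + entropy (B.set j (!(B.getD j false)))
    have := (entropy_set_lt B j hj).2 ⟨hn2, hslots⟩
    omega
  · apply kill_lemma hadj
    · intro jj hjj
      show _ ↔ _ ∧ jj ≠ (A.length-1)+(j-1) ∧ jj ≠ (A.length-1)+j
      constructor
      · intro q; exact ⟨q, by omega, by omega⟩
      · rintro ⟨q, _, _⟩; exact q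
    · intro jj hjj
      have hjj' : jj < B.length - 1 := by omega
      rw [hd_mut B j hj hslots jj hjj']
      show _ ↔ _ ∧ (A.length-1)+jj ≠ (A.length-1)+(j-1) ∧ (A.length-1)+jj ≠ (A.length-1)+j
      constructor
      · rintro ⟨q1, q2⟩; exact ⟨q1, by omega, by omega⟩
      · rintro ⟨q1, q2, q3⟩; exact ⟨q1, by omega⟩
    · intro jj hjj _ he2
      rcases eq_or_ne jj j with rfl | hne
      · rw [dsl_killed B jj hj jj (Or.inl rfl) hs2] at he2
        exact absurd he2 (by simp)
      · exact csl_setB A B j hj _ jj hne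

lemma pack_mutB_0 (A B : List Bool) (hAB : A.length = B.length) (hn2 : 2 ≤ A.length)
    (hs : dsl B 0 = false) :
    cmMove (A, B) (A, B.set 0 (!(B.getD 0 false))) ∧
    (HG (A.length-1) (dsl A) (dsl B) (csl A B)).Adj ⟨2*(A.length-1)+2, by omega⟩ ⟨A.length-1, by omega⟩ ∧
    (∀ x y, (AKres (HG (A.length-1) (dsl A) (dsl B) (csl A B))
        ⟨2*(A.length-1)+2, by omega⟩ ⟨A.length-1, by omega⟩).Adj x y ↔
      (HG (A.length-1) (dsl A) (dsl (B.set 0 (!(B.getD 0 false))))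
        (csl A (B.set 0 (!(B.getD 0 false))))).Adj x y) := by
  have hj : 0 < B.length := by omega
  have hslots : ∀ i, (i = 0 ∨ i + 1 = 0) → i < B.length - 1 → dsl B i = false := by
    intro i hi _
    rcases hi with rfl | hi
    · exact hs
    · omega
  have hadj : (HG (A.length-1) (dsl A) (dsl B) (csl A B)).Adj
      ⟨2*(A.length-1)+2, by omega⟩ ⟨A.length-1, by omega⟩ := by
    rw [HG_adj]
    constructor
    · intro hcon
      have : 2*(A.length-1)+2 = A.length-1 := congrArg Fin.val hcon
      omega
    · exact Or.inl (Or.inr (Or.inr (Or.inr (Or.inr (Or.inr (Or.inl ⟨by omega, rfl, rfl, hs⟩))))))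
  refine ⟨⟨Or.inr (Or.inr ⟨0, hj, rfl, rfl⟩), ?_⟩, hadj, ?_⟩
  · show entropy A + entropy B < entropy A + entropy (B.set 0 (!(B.getD 0 false)))
    have := (entropy_set_lt B 0 hj).2 ⟨by omega, hslots⟩
    omega
  · apply kill_lemma hadj
    · intro jj hjj
      show _ ↔ _ ∧ jj ≠ 2*(A.length-1)+2 ∧ jj ≠ A.length-1
      constructor
      · intro q; exact ⟨q, by omega, by omega⟩
      · rintro ⟨q, _, _⟩; exact q
    · intro jj hjj
      have hjj' : jj < B.length - 1 := by omega
      rw [hd_mut B 0 hj hslots jj hjj']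
      show _ ↔ _ ∧ (A.length-1)+jj ≠ 2*(A.length-1)+2 ∧ (A.length-1)+jj ≠ A.length-1
      constructor
      · rintro ⟨q1, q2⟩; exact ⟨q1, by omega, by omega⟩
      · rintro ⟨q1, q2, q3⟩; exact ⟨q1, by omega⟩
    · intro jj hjj _ he2
      rcases eq_or_ne jj 0 with rfl | hne
      · rw [dsl_killed B 0 hj 0 (Or.inl rfl) hs] at he2
        exact absurd he2 (by simp)
      · exact csl_setB A B 0 hj _ jj hne

lemma pack_mutB_end (A B : List Bool) (hAB : A.length = B.length) (hn2 : 2 ≤ A.length)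
    (hs : dsl B (A.length - 2) = false) :
    cmMove (A, B) (A, B.set (B.length - 1) (!(B.getD (B.length - 1) false))) ∧
    (HG (A.length-1) (dsl A) (dsl B) (csl A B)).Adj
      ⟨2*(A.length-1)+3, by omega⟩ ⟨(A.length-1)+(A.length-2), by omega⟩ ∧
    (∀ x y, (AKres (HG (A.length-1) (dsl A) (dsl B) (csl A B))
        ⟨2*(A.length-1)+3, by omega⟩ ⟨(A.length-1)+(A.length-2), by omega⟩).Adj x y ↔
      (HG (A.length-1) (dsl A) (dsl (B.set (B.length - 1) (!(B.getD (B.length - 1) false))))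
        (csl A (B.set (B.length - 1) (!(B.getD (B.length - 1) false))))).Adj x y) := by
  have hj : B.length - 1 < B.length := by omega
  have hslots : ∀ i, (i = B.length - 1 ∨ i + 1 = B.length - 1) → i < B.length - 1 → dsl B i = false := by
    intro i hi hir
    rcases hi with rfl | hi
    · omega
    · have : i = A.length - 2 := by omega
      rw [this]; exact hs
  have hadj : (HG (A.length-1) (dsl A) (dsl B) (csl A B)).Adj
      ⟨2*(A.length-1)+3, by omega⟩ ⟨(A.length-1)+(A.length-2), by omega⟩ := by
    rw [HG_adj]
    constructor
    · intro hcon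
      have : 2*(A.length-1)+3 = (A.length-1)+(A.length-2) := congrArg Fin.val hcon
      omega
    · refine Or.inl (Or.inr (Or.inr (Or.inr (Or.inr (Or.inr (Or.inr ⟨by omega, rfl, ?_, ?_⟩))))))
      · show (A.length-1)+(A.length-2) = (A.length-1) + ((A.length-1) - 1)
        omega
      · show dsl B ((A.length-1) - 1) = false
        have : (A.length-1) - 1 = A.length - 2 := by omega
        rw [this]; exact hs
  refine ⟨⟨Or.inr (Or.inr ⟨B.length - 1, hj, rfl, rfl⟩), ?_⟩, hadj, ?_⟩
  · show entropy A + entropy B < entropy A + entropy (B.set (B.length - 1) (!(B.getD (B.length - 1) false)))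
    have := (entropy_set_lt B (B.length - 1) hj).2 ⟨by omega, hslots⟩
    omega
  · apply kill_lemma hadj
    · intro jj hjj
      show _ ↔ _ ∧ jj ≠ 2*(A.length-1)+3 ∧ jj ≠ (A.length-1)+(A.length-2)
      constructor
      · intro q; exact ⟨q, by omega, by omega⟩
      · rintro ⟨q, _, _⟩; exact q
    · intro jj hjj
      have hjj' : jj < B.length - 1 := by omega
      rw [hd_mut B (B.length - 1) hj hslots jj hjj']
      show _ ↔ _ ∧ (A.length-1)+jj ≠ 2*(A.length-1)+3 ∧ (A.length-1)+jj ≠ (A.length-1)+(A.length-2)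
      constructor
      · rintro ⟨q1, q2⟩; exact ⟨q1, by omega, by omega⟩
      · rintro ⟨q1, q2, q3⟩; exact ⟨q1, by omega⟩
    · intro jj hjj _ _
      exact csl_setB A B (B.length - 1) hj _ jj (by omega)
lemma bool_key1 (a b p : Bool) (h1 : (a != b) = false) (h3 : (a != p) = true) :
    (p != b) = true := by
  cases a <;> cases b <;> cases p <;> simp_all

lemma bool_key2 (p q a : Bool) (h2 : (p != q) = false) (h3 : (a != p) = true) :
    (a != q) = true := by
  cases a <;> cases p <;> cases q <;> simp_all

lemma cross_pack (A B : List Bool) (hAB : A.length = B.length) (i : ℕ)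
    (hi : i < A.length - 1)
    (hs1 : dsl A i = false) (hs2 : dsl B i = false) (hs3 : csl A B i = true) :
    cmMove (A, B) (B.take (i+1) ++ A.drop (i+1), A.take (i+1) ++ B.drop (i+1)) ∧
    (HG (A.length-1) (dsl A) (dsl B) (csl A B)).Adj ⟨i, by omega⟩ ⟨(A.length-1)+i, by omega⟩ ∧
    (∀ x y, (AKres (HG (A.length-1) (dsl A) (dsl B) (csl A B))
        ⟨i, by omega⟩ ⟨(A.length-1)+i, by omega⟩).Adj x y ↔
      (HG (A.length-1) (dsl (B.take (i+1) ++ A.drop (i+1))) (dsl (A.take (i+1) ++ B.drop (i+1)))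
        (csl (B.take (i+1) ++ A.drop (i+1)) (A.take (i+1) ++ B.drop (i+1)))).Adj
        ((gsw (A.length-1) i (by omega)) x) ((gsw (A.length-1) i (by omega)) y)) := by
  have hk1 : 1 ≤ i + 1 := by omega
  have hk2 : i + 1 ≤ A.length - 1 := by omega
  have hkA : i + 1 ≤ A.length := by omega
  have hadj : (HG (A.length-1) (dsl A) (dsl B) (csl A B)).Adj ⟨i, by omega⟩ ⟨(A.length-1)+i, by omega⟩ := by
    rw [HG_adj]
    constructor
    · intro hcon
      have : i = (A.length-1)+i := congrArg Fin.val hcon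
      omega
    · refine Or.inl (Or.inr (Or.inr (Or.inl ⟨?_, rfl, hs1, hs2, hs3⟩)))
      show i < A.length - 1
      omega
  refine ⟨⟨Or.inl ⟨i+1, hk1, hk2, rfl, rfl⟩, ?_⟩, hadj, ?_⟩
  · show entropy A + entropy B <
      entropy (B.take (i+1) ++ A.drop (i+1)) + entropy (A.take (i+1) ++ B.drop (i+1))
    rw [entropy_cross_lt A B (i+1) hAB hk1 hk2]
    have h0 : i + 1 - 1 = i := by omega
    rw [h0]
    exact ⟨hs1, hs2, hs3⟩
  · -- kill then swap
    set d₂ : ℕ → Bool := fun j => if j = i then true else dsl A j with hd₂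
    set e₂ : ℕ → Bool := fun j => if j = i then true else dsl B j with he₂
    have hkill := kill_lemma (d₂ := d₂) (e₂ := e₂) (c₂ := csl A B) hadj
      (by
        intro jj hjj
        show (if jj = i then true else dsl A jj) = false ↔ _ ∧ jj ≠ i ∧ jj ≠ (A.length-1)+i
        split_ifs with h
        · subst h
          constructor
          · intro q; exact absurd q (by simp)
          · rintro ⟨_, q2, _⟩; exact absurd rfl q2
        · constructor
          · intro q; exact ⟨q, h, by omega⟩
          · rintro ⟨q, _, _⟩; exact q)
      (by
        intro jj hjj
        show (if jj = i then true else dsl B jj) = false ↔ _ ∧ (A.length-1)+jj ≠ i ∧ (A.length-1)+jj ≠ (A.length-1)+i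
        split_ifs with h
        · subst h
          constructor
          · intro q; exact absurd q (by simp)
          · rintro ⟨_, _, q3⟩; exact absurd rfl q3
        · constructor
          · intro q; exact ⟨q, by omega, by omega⟩
          · rintro ⟨q, _, _⟩; exact q)
      (fun _ _ _ _ => rfl)
    have hswap := swap_lemma (s := A.length - 1) (i := i)
      (d := d₂) (e := e₂) (c := csl A B)
      (d' := dsl (B.take (i+1) ++ A.drop (i+1)))
      (e' := dsl (A.take (i+1) ++ B.drop (i+1)))
      (c' := csl (B.take (i+1) ++ A.drop (i+1)) (A.take (i+1) ++ B.drop (i+1)))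
      (by omega)
      (by show (if i = i then true else dsl A i) = true; simp)
      (by show (if i = i then true else dsl B i) = true; simp)
      (by
        intro j hj
        rw [dsl_cross A B (i+1) j hAB hkA, if_pos (by omega)]
        show dsl B j = (if j = i then true else dsl B j)
        rw [if_neg (by omega)])
      (by
        intro j hj
        rw [dsl_cross B A (i+1) j hAB.symm (by omega), if_pos (by omega)]
        show dsl A j = (if j = i then true else dsl A j)
        rw [if_neg (by omega)])
      (by
        intro j hj1 hj2
        rcases eq_or_ne j i with rfl | hne
        · rw [dsl_cross A B (j+1) j hAB (by omega), if_neg (by omega), if_pos rfl]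
          show _ = (if j = j then true else dsl A j)
          rw [if_pos rfl]
          unfold dsl at hs1
          unfold csl at hs3
          exact bool_key1 _ _ _ hs1 hs3
        · rw [dsl_cross A B (i+1) j hAB hkA, if_neg (by omega), if_neg (by omega)]
          show dsl A j = (if j = i then true else dsl A j)
          rw [if_neg hne])
      (by
        intro j hj1 hj2
        rcases eq_or_ne j i with rfl | hne
        · rw [dsl_cross B A (j+1) j hAB.symm (by omega), if_neg (by omega), if_pos rfl]
          show _ = (if j = j then true else dsl B j)
          rw [if_pos rfl]
          unfold dsl at hs2
          unfold csl at hs3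
          exact bool_key2 _ _ _ hs2 hs3
        · rw [dsl_cross B A (i+1) j hAB.symm (by omega), if_neg (by omega), if_neg (by omega)]
          show dsl B j = (if j = i then true else dsl B j)
          rw [if_neg hne])
      (by
        intro j hj
        rw [csl_cross A B (i+1) j hAB hkA])
    intro x y
    rw [hkill x y, hswap x y]
lemma chain_iff {m : ℕ} {G G' Htot H₂ : SimpleGraph (Fin m)} {σ τ : Equiv.Perm (Fin m)}
    {u v : Fin m}
    (hσ : ∀ x y, G.Adj x y ↔ Htot.Adj (σ x) (σ y))
    (hG' : ∀ x y, G'.Adj x y ↔ (G.Adj x y ∧ x ≠ u ∧ x ≠ v ∧ y ≠ u ∧ y ≠ v))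
    (hkill : ∀ x y, (AKres Htot (σ u) (σ v)).Adj x y ↔ H₂.Adj (τ x) (τ y)) :
    ∀ x y, G'.Adj x y ↔ H₂.Adj ((σ.trans τ) x) ((σ.trans τ) y) := by
  intro x y
  have hA : H₂.Adj ((σ.trans τ) x) ((σ.trans τ) y) ↔ (AKres Htot (σ u) (σ v)).Adj (σ x) (σ y) :=
    (hkill (σ x) (σ y)).symm
  rw [hG', hσ x y, hA]
  show _ ∧ _ ↔ (Htot.Adj (σ x) (σ y) ∧ σ x ≠ σ u ∧ σ x ≠ σ v ∧ σ y ≠ σ u ∧ σ y ≠ σ v)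
  constructor
  · rintro ⟨h, h1, h2, h3, h4⟩
    exact ⟨h, fun hc => h1 (σ.injective hc), fun hc => h2 (σ.injective hc),
      fun hc => h3 (σ.injective hc), fun hc => h4 (σ.injective hc)⟩
  · rintro ⟨h, h1, h2, h3, h4⟩
    exact ⟨h, fun hc => h1 (by rw [hc]), fun hc => h2 (by rw [hc]),
      fun hc => h3 (by rw [hc]), fun hc => h4 (by rw [hc])⟩

lemma bwd_core (A B : List Bool) (hAB : A.length = B.length)
    (u v : Fin (2*(A.length-1)+4))
    (hadj : (HG (A.length-1) (dsl A) (dsl B) (csl A B)).Adj u v)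
    (hrel : slotRel (A.length-1) (dsl A) (dsl B) (csl A B) u.val v.val) :
    ∃ P' : List Bool × List Bool, cmMove (A, B) P' ∧ P'.1.length = A.length ∧
      P'.2.length = A.length ∧
      ∃ τ : Equiv.Perm (Fin (2*(A.length-1)+4)),
        ∀ x y, (AKres (HG (A.length-1) (dsl A) (dsl B) (csl A B)) u v).Adj x y ↔
          (HG (A.length-1) (dsl P'.1) (dsl P'.2) (csl P'.1 P'.2)).Adj (τ x) (τ y) := by
  rcases hrel with ⟨g1,g2,g3,g4⟩|⟨g1,g2,g3,g4,g5⟩|⟨g1,g2,g3,g4,g5⟩|⟨g1,g2,g3,g4⟩|⟨g1,g2,g3,g4⟩|⟨g1,g2,g3,g4⟩|⟨g1,g2,g3,g4⟩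
  · -- uu edge : mutate A at j = u.val + 1
    have hs1 : dsl A (u.val + 1 - 1) = false := by
      have : u.val + 1 - 1 = u.val := by omega
      rw [this]; exact g3
    obtain ⟨hcm, hadj2, hkill⟩ := pack_mutA_mid A B (u.val + 1) (by omega) (by omega) hs1 g4
    have hu : u = ⟨u.val + 1 - 1, by omega⟩ := Fin.ext (show u.val = u.val + 1 - 1 by omega)
    have hv : v = ⟨u.val + 1, by omega⟩ := Fin.ext (show v.val = u.val + 1 by omega)
    refine ⟨(A.set (u.val+1) (!(A.getD (u.val+1) false)), B), hcm, by simp, hAB.symm, Equiv.refl _, ?_⟩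
    intro x y
    rw [← hu, ← hv] at hkill
    exact hkill x y
  · -- vv edge : mutate B at j = u.val - (A.length-1) + 1
    have hs1 : dsl B (u.val - (A.length-1) + 1 - 1) = false := by
      have : u.val - (A.length-1) + 1 - 1 = u.val - (A.length-1) := by omega
      rw [this]; exact g4
    have hs2 : dsl B (u.val - (A.length-1) + 1) = false := by
      have : u.val - (A.length-1) + 1 = u.val + 1 - (A.length-1) := by omega
      rw [this]; exact g5
    obtain ⟨hcm, hadj2, hkill⟩ := pack_mutB_mid A B hAB (u.val - (A.length-1) + 1)
      (by omega) (by omega) hs1 hs2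
    have hu : u = ⟨(A.length-1) + (u.val - (A.length-1) + 1 - 1), by omega⟩ := Fin.ext (show u.val = (A.length-1) + (u.val - (A.length-1) + 1 - 1) by omega)
    have hv : v = ⟨(A.length-1) + (u.val - (A.length-1) + 1), by omega⟩ := Fin.ext (show v.val = (A.length-1) + (u.val - (A.length-1) + 1) by omega)
    refine ⟨(A, B.set (u.val - (A.length-1) + 1) (!(B.getD (u.val - (A.length-1) + 1) false))),
      hcm, rfl, by simp; omega, Equiv.refl _, ?_⟩
    intro x y
    rw [← hu, ← hv] at hkill
    exact hkill x y
  · -- rung : crossover with k = u.val + 1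
    obtain ⟨hcm, hadj2, hkill⟩ := cross_pack A B hAB u.val (by omega) g3 g4 g5
    have hu : u = ⟨u.val, by omega⟩ := Fin.ext rfl
    have hv : v = ⟨(A.length-1) + u.val, by omega⟩ := Fin.ext (show v.val = (A.length-1) + u.val by omega)
    refine ⟨(B.take (u.val+1) ++ A.drop (u.val+1), A.take (u.val+1) ++ B.drop (u.val+1)),
      hcm, ?_, ?_, gsw (A.length-1) u.val (by omega), ?_⟩
    · simp [List.length_take, List.length_drop]; omega
    · simp [List.length_take, List.length_drop]; omega
    · intro x y
      rw [← hu, ← hv] at hkill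
      exact hkill x y
  · -- pendant (2s, 0) : mutate A at 0
    obtain ⟨hcm, hadj2, hkill⟩ := pack_mutA_0 A B (by omega) g4
    have hu : u = ⟨2*(A.length-1), by omega⟩ := Fin.ext (show u.val = 2*(A.length-1) by omega)
    have hv : v = ⟨0, by omega⟩ := Fin.ext (show v.val = 0 by omega)
    refine ⟨(A.set 0 (!(A.getD 0 false)), B), hcm, by simp, hAB.symm, Equiv.refl _, ?_⟩
    intro x y
    rw [← hu, ← hv] at hkill
    exact hkill x y
  · -- pendant (2s+1, s-1) : mutate A at A.length - 1
    have hs : dsl A (A.length - 2) = false := by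
      have : A.length - 2 = A.length - 1 - 1 := by omega
      rw [this]; exact g4
    obtain ⟨hcm, hadj2, hkill⟩ := pack_mutA_end A B (by omega) hs
    have hu : u = ⟨2*(A.length-1)+1, by omega⟩ := Fin.ext (show u.val = 2*(A.length-1)+1 by omega)
    have hv : v = ⟨A.length - 2, by omega⟩ := Fin.ext (show v.val = A.length - 2 by omega)
    refine ⟨(A.set (A.length-1) (!(A.getD (A.length-1) false)), B), hcm, by simp, hAB.symm,
      Equiv.refl _, ?_⟩
    intro x y
    rw [← hu, ← hv] at hkill
    exact hkill x y
  · -- pendant (2s+2, s) : mutate B at 0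
    obtain ⟨hcm, hadj2, hkill⟩ := pack_mutB_0 A B hAB (by omega) g4
    have hu : u = ⟨2*(A.length-1)+2, by omega⟩ := Fin.ext (show u.val = 2*(A.length-1)+2 by omega)
    have hv : v = ⟨A.length-1, by omega⟩ := Fin.ext (show v.val = A.length-1 by omega)
    refine ⟨(A, B.set 0 (!(B.getD 0 false))), hcm, rfl, by simp; omega, Equiv.refl _, ?_⟩
    intro x y
    rw [← hu, ← hv] at hkill
    exact hkill x y
  · -- pendant (2s+3, s+(s-1)) : mutate B at B.length - 1
    have hs : dsl B (A.length - 2) = false := by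
      have : A.length - 2 = A.length - 1 - 1 := by omega
      rw [this]; exact g4
    obtain ⟨hcm, hadj2, hkill⟩ := pack_mutB_end A B hAB (by omega) hs
    have hu : u = ⟨2*(A.length-1)+3, by omega⟩ := Fin.ext (show u.val = 2*(A.length-1)+3 by omega)
    have hv : v = ⟨(A.length-1) + (A.length-2), by omega⟩ := Fin.ext (show v.val = (A.length-1) + (A.length-2) by omega)
    refine ⟨(A, B.set (B.length-1) (!(B.getD (B.length-1) false))), hcm, rfl, by simp; omega,
      Equiv.refl _, ?_⟩
    intro x y
    rw [← hu, ← hv] at hkill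
    exact hkill x y
lemma fwd_core (A B : List Bool) (hAB : A.length = B.length)
    (P' : List Bool × List Bool) (hmv : cmMove (A, B) P') :
    ∃ u v : Fin (2*(A.length-1)+4),
      (HG (A.length-1) (dsl A) (dsl B) (csl A B)).Adj u v ∧
      P'.1.length = A.length ∧ P'.2.length = A.length ∧
      ∃ τ : Equiv.Perm (Fin (2*(A.length-1)+4)),
        ∀ x y, (AKres (HG (A.length-1) (dsl A) (dsl B) (csl A B)) u v).Adj x y ↔
          (HG (A.length-1) (dsl P'.1) (dsl P'.2) (csl P'.1 P'.2)).Adj (τ x) (τ y) := by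
  obtain ⟨hd, hent⟩ := hmv
  obtain ⟨C, D⟩ := P'
  rcases hd with ⟨k, hk1, hk2, hP1, hP2⟩ | ⟨j, hj, hP1, hP2⟩ | ⟨j, hj, hP1, hP2⟩
  · -- crossover
    obtain ⟨i, rfl⟩ : ∃ i, k = i + 1 := ⟨k - 1, by omega⟩
    have hk2' : i + 1 ≤ A.length - 1 := hk2
    have hP1' : C = B.take (i+1) ++ A.drop (i+1) := hP1
    have hP2' : D = A.take (i+1) ++ B.drop (i+1) := hP2
    subst hP1'; subst hP2'
    have hE : dsl A (i+1-1) = false ∧ dsl B (i+1-1) = false ∧ csl A B (i+1-1) = true := by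
      have h' : entropy A + entropy B <
          entropy (B.take (i+1) ++ A.drop (i+1)) + entropy (A.take (i+1) ++ B.drop (i+1)) := hent
      exact (entropy_cross_lt A B (i+1) hAB (by omega) hk2').1 h'
    obtain ⟨hs1, hs2, hs3⟩ := hE
    have hs1' : dsl A i = false := hs1
    have hs2' : dsl B i = false := hs2
    have hs3' : csl A B i = true := hs3
    obtain ⟨_, hadj, hkill⟩ := cross_pack A B hAB i (by omega) hs1' hs2' hs3'
    refine ⟨_, _, hadj, ?_, ?_, _, hkill⟩
    · show (B.take (i+1) ++ A.drop (i+1)).length = A.length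
      simp [List.length_take, List.length_drop]; omega
    · show (A.take (i+1) ++ B.drop (i+1)).length = A.length
      simp [List.length_take, List.length_drop]; omega
  · -- mutation on A
    have hj' : j < A.length := hj
    have hP1' : C = A.set j (!(A.getD j false)) := hP1
    have hP2' : B = D := hP2.symm
    subst hP1'; subst hP2'
    have hE : entropy A < entropy (A.set j (!(A.getD j false))) := by
      have h' : entropy A + entropy B < entropy (A.set j (!(A.getD j false))) + entropy B := hent
      omega
    obtain ⟨hn2, hslots⟩ := (entropy_set_lt A j hj').1 hE
    by_cases h0 : j = 0
    · subst h0
      obtain ⟨_, hadj, hkill⟩ := pack_mutA_0 A B hn2 (hslots 0 (Or.inl rfl) (by omega))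
      exact ⟨_, _, hadj, by simp, hAB.symm, Equiv.refl _, hkill⟩
    · by_cases hend : j = A.length - 1
      · subst hend
        obtain ⟨_, hadj, hkill⟩ := pack_mutA_end A B hn2
          (hslots (A.length - 2) (Or.inr (by omega)) (by omega))
        exact ⟨_, _, hadj, by simp, hAB.symm, Equiv.refl _, hkill⟩
      · obtain ⟨_, hadj, hkill⟩ := pack_mutA_mid A B j (by omega) (by omega)
          (hslots (j-1) (Or.inr (by omega)) (by omega))
          (hslots j (Or.inl rfl) (by omega))
        exact ⟨_, _, hadj, by simp, hAB.symm, Equiv.refl _, hkill⟩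
  · -- mutation on B
    have hj' : j < B.length := hj
    have hP1' : A = C := hP1.symm
    have hP2' : D = B.set j (!(B.getD j false)) := hP2
    subst hP1'; subst hP2'
    have hE : entropy B < entropy (B.set j (!(B.getD j false))) := by
      have h' : entropy A + entropy B < entropy A + entropy (B.set j (!(B.getD j false))) := hent
      omega
    obtain ⟨hn2, hslots⟩ := (entropy_set_lt B j hj').1 hE
    by_cases h0 : j = 0
    · subst h0
      obtain ⟨_, hadj, hkill⟩ := pack_mutB_0 A B hAB (by omega) (hslots 0 (Or.inl rfl) (by omega))
      exact ⟨_, _, hadj, rfl, by simp; omega, Equiv.refl _, hkill⟩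
    · by_cases hend : j = B.length - 1
      · subst hend
        obtain ⟨_, hadj, hkill⟩ := pack_mutB_end A B hAB (by omega)
          (hslots (A.length - 2) (Or.inr (by omega)) (by omega))
        exact ⟨_, _, hadj, rfl, by simp; omega, Equiv.refl _, hkill⟩
      · obtain ⟨_, hadj, hkill⟩ := pack_mutB_mid A B hAB j (by omega) (by omega)
          (hslots (j-1) (Or.inr (by omega)) (by omega))
          (hslots j (Or.inl rfl) (by omega))
        exact ⟨_, _, hadj, rfl, by simp; omega, Equiv.refl _, hkill⟩
lemma main_gen
    (gCM : List Bool × List Bool → ℕ)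
    (hCM : ∀ P, gCM P = mex {m | ∃ P', cmMove P P' ∧ m = gCM P'})
    (gAK : (m : ℕ) → SimpleGraph (Fin m) → ℕ)
    (hAK : ∀ (m : ℕ) (G : SimpleGraph (Fin m)),
      gAK m G = mex {x | ∃ G', arcKaylesMove G G' ∧ x = gAK m G'})
    (n : ℕ) :
    ∀ P G, (P.1.length = n ∧ P.2.length = n ∧
      ∃ σ : Equiv.Perm (Fin (2*(n-1)+4)),
        ∀ x y, G.Adj x y ↔ (HG (n-1) (dsl P.1) (dsl P.2) (csl P.1 P.2)).Adj (σ x) (σ y)) →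
      gCM P = gAK (2*(n-1)+4) G := by
  apply bisim gCM hCM (gAK (2*(n-1)+4)) (hAK (2*(n-1)+4))
  · -- forward
    rintro P G ⟨hA, hB, σ, hσ⟩ P' hmv
    obtain ⟨A, B⟩ := P
    have hA' : A.length = n := hA
    subst hA'
    have hAB : A.length = B.length := (show B.length = A.length from hB).symm
    obtain ⟨u, v, hadj, hl1, hl2, τ, hkill⟩ := fwd_core A B hAB P' hmv
    refine ⟨AKres G (σ.symm u) (σ.symm v), akres_move ?_, hl1, hl2, σ.trans τ, ?_⟩
    · apply (hσ _ _).2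
      rw [Equiv.apply_symm_apply, Equiv.apply_symm_apply]
      exact hadj
    · apply chain_iff hσ (fun _ _ => Iff.rfl)
      rw [Equiv.apply_symm_apply, Equiv.apply_symm_apply]
      exact hkill
  · -- backward
    rintro P G ⟨hA, hB, σ, hσ⟩ G' hmv
    obtain ⟨A, B⟩ := P
    have hA' : A.length = n := hA
    subst hA'
    have hAB : A.length = B.length := (show B.length = A.length from hB).symm
    obtain ⟨u, v, huv, hG'⟩ := hmv
    have hadjH : (HG (A.length-1) (dsl A) (dsl B) (csl A B)).Adj (σ u) (σ v) := (hσ u v).1 huv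
    rcases (HG_adj.1 hadjH).2 with hrel | hrel
    · obtain ⟨P', hcm, hl1, hl2, τ, hkill⟩ := bwd_core A B hAB (σ u) (σ v) hadjH hrel
      exact ⟨P', hcm, hl1, hl2, σ.trans τ, chain_iff hσ hG' hkill⟩
    · obtain ⟨P', hcm, hl1, hl2, τ, hkill⟩ := bwd_core A B hAB (σ v) (σ u) hadjH.symm hrel
      have hG'2 : ∀ x y, G'.Adj x y ↔ (G.Adj x y ∧ x ≠ v ∧ x ≠ u ∧ y ≠ v ∧ y ≠ u) := by
        intro x y; rw [hG' x y]; tauto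
      exact ⟨P', hcm, hl1, hl2, σ.trans τ, chain_iff hσ hG'2 hkill⟩


/-- For every position `P` of Crossover-Mutation there exists a finite simple
graph `G` (on some `Fin m`) such that the Arc Kayles position on `G` is equivalent to `P`:
the Arc Kayles game on `G` has the same Grundy value as `P`.  Here `gCM` and `gAK` are the
Grundy functions of the two games, characterized by their mex recurrences. -/
theorem cm_equivalent_to_arc_kayles
    (gCM : List Bool × List Bool → ℕ)
    (hCM : ∀ P, gCM P = mex {m | ∃ P', cmMove P P' ∧ m = gCM P'})
    (gAK : (m : ℕ) → SimpleGraph (Fin m) → ℕ)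
    (hAK : ∀ (m : ℕ) (G : SimpleGraph (Fin m)),
      gAK m G = mex {x | ∃ G', arcKaylesMove G G' ∧ x = gAK m G'})
    (B₁ B₂ : List Bool) (hlen : B₁.length = B₂.length) :
    ∃ (m : ℕ) (G : SimpleGraph (Fin m)), gAK m G = gCM (B₁, B₂) := by
  refine ⟨2*(B₁.length-1)+4, HG (B₁.length-1) (dsl B₁) (dsl B₂) (csl B₁ B₂), ?_⟩
  exact (main_gen gCM hCM gAK hAK B₁.length (B₁, B₂) _
    ⟨rfl, hlen.symm, Equiv.refl _, fun _ _ => Iff.rfl⟩).symm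
end

section
/- For every k ≥ 1, the Arc Kayles position on the graph G⁺(2k), consisting of the 2×(2k) grid graph with one pendant edge attached at each of its four corner vertices, has Grundy value 0. -/
lemma mex_eq_zero {S : Set ℕ} (h : 0 ∉ S) : mex S = 0 :=
  Nat.sInf_eq_zero.mpr (Or.inl h)

lemma mex_ne_zero {S : Set ℕ} (h0 : 0 ∈ S) (hfin : S.Finite) : mex S ≠ 0 := by
  intro h
  have hne : {n : ℕ | n ∉ S}.Nonempty := hfin.infinite_compl.nonempty
  have := Nat.sInf_mem hne
  rw [mex] at h
  rw [h] at this
  exact this h0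

/-- Deleting all edges incident to `u` or `v`. -/
def akDel {V : Type} (G : SimpleGraph V) (u v : V) : SimpleGraph V where
  Adj x y := G.Adj x y ∧ x ≠ u ∧ x ≠ v ∧ y ≠ u ∧ y ≠ v
  symm := ⟨by rintro x y ⟨h, a, b, c, d⟩; exact ⟨h.symm, c, d, a, b⟩⟩
  loopless := ⟨fun x ⟨h, _⟩ => G.irrefl h⟩

lemma akDel_move {V : Type} {G : SimpleGraph V} {u v : V} (h : G.Adj u v) :
    arcKaylesMove G (akDel G u v) := ⟨u, v, h, fun _ _ => Iff.rfl⟩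

/-- Mirroring lemma: a position with a fixed-point-free involutive symmetry having no
invariant edge has Grundy value 0. -/
lemma sym_grundy_zero {V : Type} (hV : Fintype V)
    (g : SimpleGraph V → ℕ)
    (hg : ∀ G : SimpleGraph V, g G = mex {x | ∃ G', arcKaylesMove G G' ∧ x = g G'})
    (σ : V → V) (hσ : Function.Involutive σ) (hfpf : ∀ u, σ u ≠ u) :
    ∀ G : SimpleGraph V, (∀ x y, G.Adj x y ↔ G.Adj (σ x) (σ y)) →
      (∀ u, ¬ G.Adj u (σ u)) → g G = 0 := by
  haveI := hV
  have hinj := hσ.injective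
  have key : ∀ a b : V, a ≠ σ b ↔ σ a ≠ b := fun a b =>
    ⟨fun h hc => h (by rw [← hc, hσ]), fun h hc => h (by rw [hc, hσ])⟩
  have hfin : ∀ G : SimpleGraph V,
      ({x | ∃ G', arcKaylesMove G G' ∧ x = g G'} : Set ℕ).Finite := by
    intro G
    apply Set.Finite.subset (Set.finite_range g)
    rintro x ⟨G', _, rfl⟩
    exact ⟨G', rfl⟩
  suffices H : ∀ n : ℕ, ∀ G : SimpleGraph V, G.edgeSet.ncard = n →
      (∀ x y, G.Adj x y ↔ G.Adj (σ x) (σ y)) → (∀ u, ¬ G.Adj u (σ u)) → g G = 0 by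
    intro G hs hf; exact H _ G rfl hs hf
  intro n
  induction n using Nat.strong_induction_on with
  | _ n IH =>
    intro G hn hsym hfree
    rw [hg]
    apply mex_eq_zero
    rintro ⟨G'', ⟨u, v, huv, hadj⟩, hx0⟩
    -- the mirrored response: in G'' play the edge (σ u, σ v)
    have hσu_u : σ u ≠ u := hfpf u
    have hσu_v : σ u ≠ v := fun h => hfree u (by rw [h]; exact huv)
    have hσv_v : σ v ≠ v := hfpf v
    have hσv_u : σ v ≠ u := fun h => hσu_v (by rw [← h, hσ])
    have hG''adj : G''.Adj (σ u) (σ v) :=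
      (hadj _ _).mpr ⟨(hsym u v).mp huv, hσu_u, hσu_v, hσv_u, hσv_v⟩
    set G3 := akDel G'' (σ u) (σ v) with hG3
    have hmove3 : arcKaylesMove G'' G3 := akDel_move hG''adj
    have hchar : ∀ x y, G3.Adj x y ↔ (G.Adj x y ∧
        (x ≠ u ∧ x ≠ v ∧ x ≠ σ u ∧ x ≠ σ v) ∧
        (y ≠ u ∧ y ≠ v ∧ y ≠ σ u ∧ y ≠ σ v)) := by
      intro x y
      show (G''.Adj x y ∧ _ ∧ _ ∧ _ ∧ _) ↔ _
      rw [hadj]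
      tauto
    have hsym3 : ∀ x y, G3.Adj x y ↔ G3.Adj (σ x) (σ y) := by
      intro x y
      rw [hchar, hchar, ← hsym x y]
      simp only [hinj.ne_iff, ← key]
      tauto
    have hfree3 : ∀ w, ¬ G3.Adj w (σ w) := fun w h => hfree w ((hchar _ _).mp h).1
    have hle : G3 ≤ G := fun x y h => ((hchar x y).mp h).1
    have hss : G3.edgeSet ⊂ G.edgeSet := by
      refine ⟨SimpleGraph.edgeSet_mono hle, fun hsup => ?_⟩
      have : G3.Adj u v := hsup ((SimpleGraph.mem_edgeSet G).mpr huv)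
      exact ((hchar u v).mp this).2.1.1 rfl
    have hlt : G3.edgeSet.ncard < n := hn ▸ Set.ncard_lt_ncard hss (Set.toFinite _)
    have h3 : g G3 = 0 := IH _ hlt G3 rfl hsym3 hfree3
    have hne : g G'' ≠ 0 := by
      rw [hg]
      exact mex_ne_zero ⟨G3, hmove3, h3.symm⟩ (hfin G'')
    exact hne hx0.symm

/-- The 2×n grid graph: vertices `Fin 2 × Fin n`, adjacent when they differ by 1 in exactly
one coordinate. -/
def grid2 (n : ℕ) : SimpleGraph (Fin 2 × Fin n) :=
  (SimpleGraph.pathGraph 2).boxProd (SimpleGraph.pathGraph n)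

/-- The four corner vertices of the 2×(m+1) grid graph: (row 1, col 1), (row 2, col 1),
(row 1, col m+1), (row 2, col m+1). -/
def corner (m : ℕ) : Fin 4 → Fin 2 × Fin (m + 1) :=
  ![(0, 0), (1, 0), (0, Fin.last m), (1, Fin.last m)]

/-- The 2×(m+1) grid graph with `p` pendant vertices, pendant vertex `j` being attached at
the corner `corner m (c j)`.  With `p = 3` and `c` injective this is `G(m+1)` (a pendant
edge at each of three of the four corners); with `p = 4` and `c` injective it is `G⁺(m+1)`
(a pendant edge at each of the four corners). -/
def gridCorners (m p : ℕ) (c : Fin p → Fin 4) :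
    SimpleGraph ((Fin 2 × Fin (m + 1)) ⊕ Fin p) :=
  SimpleGraph.fromRel fun x y =>
    match x, y with
    | Sum.inl a, Sum.inl b => (grid2 (m + 1)).Adj a b
    | Sum.inl a, Sum.inr j => corner m (c j) = a
    | _, _ => False

lemma gc_adj_inl_inl {m p : ℕ} {c : Fin p → Fin 4} (a b : Fin 2 × Fin (m + 1)) :
    (gridCorners m p c).Adj (Sum.inl a) (Sum.inl b) ↔ (grid2 (m + 1)).Adj a b := by
  simp only [gridCorners, SimpleGraph.fromRel_adj, ne_eq, Sum.inl.injEq]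
  exact ⟨fun ⟨_, hor⟩ => hor.elim id SimpleGraph.Adj.symm, fun h => ⟨h.ne, Or.inl h⟩⟩

lemma gc_adj_inl_inr {m p : ℕ} {c : Fin p → Fin 4} (a : Fin 2 × Fin (m + 1)) (j : Fin p) :
    (gridCorners m p c).Adj (Sum.inl a) (Sum.inr j) ↔ corner m (c j) = a := by
  simp [gridCorners, SimpleGraph.fromRel_adj]

lemma gc_adj_inr_inr {m p : ℕ} {c : Fin p → Fin 4} (i j : Fin p) :
    ¬ (gridCorners m p c).Adj (Sum.inr i) (Sum.inr j) := by
  simp [gridCorners, SimpleGraph.fromRel_adj]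

lemma grid2_rev {n : ℕ} (x y : Fin 2 × Fin n) :
    (grid2 n).Adj x y ↔ (grid2 n).Adj (x.1.rev, x.2.rev) (y.1.rev, y.2.rev) := by
  have h1 := x.1.isLt; have h2 := x.2.isLt; have h3 := y.1.isLt; have h4 := y.2.isLt
  simp only [grid2, SimpleGraph.boxProd_adj, SimpleGraph.pathGraph_adj, Fin.ext_iff,
    Fin.val_rev]
  omega

lemma corner_rev (m : ℕ) (j : Fin 4) :
    corner m j.rev = Prod.map Fin.rev Fin.rev (corner m j) := by
  fin_cases j <;>
    simp [corner, Fin.rev_zero, Fin.rev_last, show Fin.rev (0 : Fin 4) = 3 from rfl,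
      show Fin.rev (1 : Fin 4) = 2 from rfl, show Fin.rev (2 : Fin 4) = 1 from rfl,
      show Fin.rev (3 : Fin 4) = 0 from rfl,
      show Fin.rev (0 : Fin 2) = 1 from rfl, show Fin.rev (1 : Fin 2) = 0 from rfl,
      Prod.map]

lemma gc_adj_inr_inl {m p : ℕ} {c : Fin p → Fin 4} (a : Fin 2 × Fin (m + 1)) (j : Fin p) :
    (gridCorners m p c).Adj (Sum.inr j) (Sum.inl a) ↔ corner m (c j) = a := by
  rw [SimpleGraph.adj_comm]; exact gc_adj_inl_inr a j

/-- For every `k ≥ 1`, the Arc Kayles position on `G⁺(2k)`, the 2×(2k) grid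
graph with one pendant edge attached at each of its four corner vertices, has Grundy
value 0.  (Here `2·k - 1 + 1 = 2·k` is the number of columns.) -/
theorem arc_kayles_Gplus_even (k : ℕ) (hk : 1 ≤ k)
    (gAK : ∀ (V : Type), Fintype V → SimpleGraph V → ℕ)
    (hAK : ∀ (V : Type) (hV : Fintype V) (G : SimpleGraph V),
      gAK V hV G = mex {x | ∃ G', arcKaylesMove G G' ∧ x = gAK V hV G'}) :
    gAK ((Fin 2 × Fin (2 * k - 1 + 1)) ⊕ Fin 4) inferInstance
      (gridCorners (2 * k - 1) 4 (fun j => j)) = 0 := by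
  have hrevinj : Function.Injective
      (Prod.map (Fin.rev : Fin 2 → Fin 2) (Fin.rev : Fin (2 * k - 1 + 1) → Fin (2 * k - 1 + 1))) :=
    Function.Injective.prodMap Fin.rev_injective Fin.rev_injective
  refine sym_grundy_zero inferInstance
    (gAK ((Fin 2 × Fin (2 * k - 1 + 1)) ⊕ Fin 4) inferInstance)
    (hAK ((Fin 2 × Fin (2 * k - 1 + 1)) ⊕ Fin 4) inferInstance)
    (Sum.map (Prod.map Fin.rev Fin.rev) Fin.rev) ?_ ?_ _ ?_ ?_
  · -- involutive
    rintro (⟨r, j⟩ | j) <;> simp [Prod.map, Fin.rev_rev]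
  · -- fixed-point-free
    rintro (⟨r, j⟩ | j) h
    · have hr := r.isLt; have hj := j.isLt
      simp only [Sum.map_inl, Sum.inl.injEq, Prod.map, Prod.mk.injEq, Fin.ext_iff,
        Fin.val_rev] at h
      omega
    · have hj := j.isLt
      simp only [Sum.map_inr, Sum.inr.injEq, Fin.ext_iff, Fin.val_rev] at h
      omega
  · -- symmetry
    rintro (a | i) (b | j)
    · rw [gc_adj_inl_inl, Sum.map_inl, Sum.map_inl, gc_adj_inl_inl]
      exact grid2_rev a b
    · rw [gc_adj_inl_inr, Sum.map_inl, Sum.map_inr, gc_adj_inl_inr]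
      show _ ↔ corner _ (Fin.rev j) = _
      rw [corner_rev]
      exact (hrevinj.eq_iff).symm
    · rw [gc_adj_inr_inl, Sum.map_inl, Sum.map_inr, gc_adj_inr_inl]
      show _ ↔ corner _ (Fin.rev i) = _
      rw [corner_rev]
      exact (hrevinj.eq_iff).symm
    · exact iff_of_false (gc_adj_inr_inr _ _) (gc_adj_inr_inr _ _)
  · -- no edge between a vertex and its image
    rintro (⟨r, j⟩ | i) h
    · have h' := (gc_adj_inl_inl (r, j) (Prod.map Fin.rev Fin.rev (r, j))).mp h
      have hr := r.isLt; have hj := j.isLt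
      simp only [grid2, SimpleGraph.boxProd_adj, SimpleGraph.pathGraph_adj, Prod.map,
        Fin.ext_iff, Fin.val_rev] at h'
      omega
    · exact gc_adj_inr_inr _ _ h
end

section
/- For k ∈ {0,1}, the Arc Kayles positions on the graphs G(2k+1) (the 2×(2k+1) grid graph with one pendant edge at each of three corners) and G⁺(2k+1) (with one pendant edge at each of all four corners) each have Grundy value 2 (game value *2). -/
/- ## auxiliary machinery -/


def mexA (l : List ℕ) : ℕ → ℕ → ℕ
  | 0, n => n
  | f + 1, n => if n ∈ l then mexA l f (n + 1) else n

def mexL (l : List ℕ) : ℕ := mexA l (l.length + 1) 0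

lemma mexA_spec (l : List ℕ) :
    ∀ f n, (∀ m < n, m ∈ l) → (∃ t, t ∉ l ∧ t ≤ n + f) →
      mexA l f n ∉ l ∧ ∀ m < mexA l f n, m ∈ l := by
  intro f
  induction f with
  | zero =>
    intro n hb hex
    obtain ⟨t, htl, hle⟩ := hex
    have ht : t = n := by
      rcases Nat.lt_or_ge t n with h | h
      · exact absurd (hb t h) htl
      · omega
    subst ht
    exact ⟨htl, hb⟩
  | succ f ih =>
    intro n hb hex
    by_cases h : n ∈ l
    · rw [show mexA l (f + 1) n = mexA l f (n + 1) by simp [mexA, h]]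
      apply ih
      · intro m hm
        rcases Nat.lt_or_ge m n with h2 | h2
        · exact hb m h2
        · have : m = n := by omega
          subst this; exact h
      · obtain ⟨t, htl, hle⟩ := hex
        refine ⟨t, htl, ?_⟩
        have : t ≠ n := fun hh => htl (hh ▸ h)
        omega
    · rw [show mexA l (f + 1) n = n by simp [mexA, h]]
      exact ⟨h, hb⟩

lemma exists_not_mem_list (l : List ℕ) : ∃ t, t ∉ l ∧ t ≤ l.length := by
  by_contra h
  push_neg at h
  have hsub : Finset.range (l.length + 1) ⊆ l.toFinset := by
    intro t ht
    rw [Finset.mem_range] at ht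
    rw [List.mem_toFinset]
    by_contra h2
    have := h t h2
    omega
  have h1 := Finset.card_le_card hsub
  rw [Finset.card_range] at h1
  have h2 := l.toFinset_card_le
  omega

lemma mexL_spec (l : List ℕ) : mexL l ∉ l ∧ ∀ m < mexL l, m ∈ l := by
  apply mexA_spec
  · intro m hm; omega
  · obtain ⟨t, h1, h2⟩ := exists_not_mem_list l
    exact ⟨t, h1, by omega⟩

lemma mex_list (l : List ℕ) : mex {n | n ∈ l} = mexL l := by
  obtain ⟨h1, h2⟩ := mexL_spec l
  have hmemset : mexL l ∈ {n : ℕ | n ∉ {n : ℕ | n ∈ l}} := h1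
  apply le_antisymm
  · exact Nat.sInf_le hmemset
  · have hne : ({n : ℕ | n ∉ {n : ℕ | n ∈ l}}).Nonempty := ⟨mexL l, hmemset⟩
    have hmem := Nat.sInf_mem hne
    by_contra h
    push_neg at h
    exact hmem (h2 _ h)

/- ## grundy on edge lists -/

def grundyF {α : Type} [DecidableEq α] : ℕ → List (α × α) → ℕ
  | 0, _ => 0
  | f + 1, l =>
    mexL (l.map fun e => grundyF f (l.filter fun p =>
      decide (p.1 ≠ e.1 ∧ p.1 ≠ e.2 ∧ p.2 ≠ e.1 ∧ p.2 ≠ e.2)))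

lemma grundyF_map {α β : Type} [DecidableEq α] [DecidableEq β] (f : α → β)
    (hf : Function.Injective f) :
    ∀ (fuel : ℕ) (l : List (α × α)),
      grundyF fuel (l.map (Prod.map f f)) = grundyF fuel l := by
  intro fuel
  induction fuel with
  | zero => intro l; rfl
  | succ n ih =>
    intro l
    show mexL _ = mexL _
    congr 1
    rw [List.map_map]
    apply List.map_congr_left
    intro e _
    show grundyF n _ = grundyF n _
    have heq : (l.map (Prod.map f f)).filter
          (fun p => decide (p.1 ≠ (Prod.map f f e).1 ∧ p.1 ≠ (Prod.map f f e).2 ∧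
            p.2 ≠ (Prod.map f f e).1 ∧ p.2 ≠ (Prod.map f f e).2))
        = (l.filter fun p =>
            decide (p.1 ≠ e.1 ∧ p.1 ≠ e.2 ∧ p.2 ≠ e.1 ∧ p.2 ≠ e.2)).map (Prod.map f f) := by
      rw [List.filter_map]
      refine congrArg (List.map (Prod.map f f)) (List.filter_congr ?_)
      intro p _
      simp only [Function.comp, Prod.map, decide_eq_decide, hf.ne_iff]
    rw [heq, ih]

/- ## correctness of grundyF against the gAK recursion -/

def delG {V : Type} (G : SimpleGraph V) (u v : V) : SimpleGraph V where
  Adj x y := G.Adj x y ∧ x ≠ u ∧ x ≠ v ∧ y ≠ u ∧ y ≠ v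
  symm := ⟨fun x y ⟨h, h1, h2, h3, h4⟩ => ⟨h.symm, h3, h4, h1, h2⟩⟩
  loopless := ⟨fun x ⟨h, _⟩ => h.ne rfl⟩

lemma sub_len {V : Type} [DecidableEq V] (l : List (V × V)) (e : V × V) (he : e ∈ l) :
    (l.filter fun p =>
      decide (p.1 ≠ e.1 ∧ p.1 ≠ e.2 ∧ p.2 ≠ e.1 ∧ p.2 ≠ e.2)).length < l.length := by
  have h1 := List.length_filter_le
    (fun p : V × V => decide (p.1 ≠ e.1 ∧ p.1 ≠ e.2 ∧ p.2 ≠ e.1 ∧ p.2 ≠ e.2)) l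
  rcases Nat.lt_or_ge _ _ with h | h
  · exact h
  · exfalso
    have heq : (l.filter fun p =>
        decide (p.1 ≠ e.1 ∧ p.1 ≠ e.2 ∧ p.2 ≠ e.1 ∧ p.2 ≠ e.2)).length = l.length := by omega
    have := List.length_filter_eq_length_iff.mp heq e he
    simp at this

lemma rep_sub {V : Type} [DecidableEq V] {l : List (V × V)} {G : SimpleGraph V}
    (hrep : ∀ x y, G.Adj x y ↔ ((x, y) ∈ l ∨ (y, x) ∈ l)) (u v : V) (e : V × V)
    (hcase : e = (u, v) ∨ e = (v, u)) :
    ∀ x y, (G.Adj x y ∧ x ≠ u ∧ x ≠ v ∧ y ≠ u ∧ y ≠ v) ↔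
      ((x, y) ∈ l.filter (fun p =>
          decide (p.1 ≠ e.1 ∧ p.1 ≠ e.2 ∧ p.2 ≠ e.1 ∧ p.2 ≠ e.2)) ∨
       (y, x) ∈ l.filter (fun p =>
          decide (p.1 ≠ e.1 ∧ p.1 ≠ e.2 ∧ p.2 ≠ e.1 ∧ p.2 ≠ e.2))) := by
  intro x y
  rcases hcase with rfl | rfl <;>
    simp only [List.mem_filter, decide_eq_true_eq, hrep x y] <;> tauto

lemma key {V : Type} [DecidableEq V] (hV : Fintype V)
    (gAK : ∀ (V : Type), Fintype V → SimpleGraph V → ℕ)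
    (hAK : ∀ (V : Type) (hV : Fintype V) (G : SimpleGraph V),
      gAK V hV G = mex {x | ∃ G', arcKaylesMove G G' ∧ x = gAK V hV G'}) :
    ∀ (fuel : ℕ) (l : List (V × V)) (G : SimpleGraph V), l.length ≤ fuel →
      (∀ x y, G.Adj x y ↔ ((x, y) ∈ l ∨ (y, x) ∈ l)) →
      gAK V hV G = grundyF fuel l := by
  intro fuel
  induction fuel with
  | zero =>
    intro l G hlen hrep
    have hl : l = [] := List.length_eq_zero_iff.mp (Nat.le_zero.mp hlen)
    subst hl
    rw [hAK]
    have hset : {x | ∃ G', arcKaylesMove G G' ∧ x = gAK V hV G'}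
        = {x : ℕ | x ∈ ([] : List ℕ)} := by
      ext n
      simp only [Set.mem_setOf_eq, List.not_mem_nil, iff_false]
      rintro ⟨G', ⟨u, v, huv, -⟩, -⟩
      have := (hrep u v).mp huv
      simp at this
    rw [hset, mex_list]
    rfl
  | succ f ih =>
    intro l G hlen hrep
    rw [hAK]
    have hset : {x | ∃ G', arcKaylesMove G G' ∧ x = gAK V hV G'}
        = {x : ℕ | x ∈ l.map fun e => grundyF f (l.filter fun p =>
            decide (p.1 ≠ e.1 ∧ p.1 ≠ e.2 ∧ p.2 ≠ e.1 ∧ p.2 ≠ e.2))} := by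
      ext n
      simp only [Set.mem_setOf_eq, List.mem_map]
      constructor
      · rintro ⟨G', ⟨u, v, huv, hadj⟩, rfl⟩
        rcases (hrep u v).mp huv with he | he
        · refine ⟨(u, v), he, ?_⟩
          refine (ih _ G' ?_ ?_).symm
          · have := sub_len l (u, v) he; omega
          · intro x y
            exact (hadj x y).trans (rep_sub hrep u v (u, v) (Or.inl rfl) x y)
        · refine ⟨(v, u), he, ?_⟩
          refine (ih _ G' ?_ ?_).symm
          · have := sub_len l (v, u) he; omega
          · intro x y
            exact (hadj x y).trans (rep_sub hrep u v (v, u) (Or.inr rfl) x y)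
      · rintro ⟨e, he, rfl⟩
        have hadj : G.Adj e.1 e.2 := (hrep e.1 e.2).mpr (Or.inl (by cases e; exact he))
        refine ⟨delG G e.1 e.2, ⟨e.1, e.2, hadj, fun x y => Iff.rfl⟩, ?_⟩
        refine (ih _ _ ?_ ?_).symm
        · have := sub_len l e he; omega
        · intro x y
          exact rep_sub hrep e.1 e.2 e (Or.inl rfl) x y
    rw [hset, mex_list]
    rfl

/- ## concrete encoding of gridCorners -/

abbrev VV (m p : ℕ) := (Fin 2 × Fin (m + 1)) ⊕ Fin p

def vertsL (m p : ℕ) : List (VV m p) :=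
  ((List.finRange 2).flatMap fun i => (List.finRange (m + 1)).map fun j => Sum.inl (i, j))
    ++ (List.finRange p).map Sum.inr

lemma mem_vertsL (m p : ℕ) (x : VV m p) : x ∈ vertsL m p := by
  rcases x with ⟨i, j⟩ | t
  · apply List.mem_append_left
    rw [List.mem_flatMap]
    exact ⟨i, List.mem_finRange i, List.mem_map.mpr ⟨j, List.mem_finRange j, rfl⟩⟩
  · apply List.mem_append_right
    exact List.mem_map.mpr ⟨t, List.mem_finRange t, rfl⟩

def encV (m p : ℕ) : VV m p → ℕ
  | Sum.inl (i, j) => 2 * j.val + i.val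
  | Sum.inr t => 2 * (m + 1) + t.val

lemma encV_inj (m p : ℕ) : Function.Injective (encV m p) := by
  rintro (⟨i, j⟩ | t) (⟨i', j'⟩ | t') h
  · simp only [encV] at h
    have hi := i.isLt; have hi' := i'.isLt
    have : i.val = i'.val ∧ j.val = j'.val := by omega
    simp [Prod.ext_iff, Fin.ext_iff, this.1, this.2]
  · exfalso
    simp only [encV] at h
    have := i.isLt; have := j.isLt
    omega
  · exfalso
    simp only [encV] at h
    have := i'.isLt; have := j'.isLt
    omega
  · simp only [encV] at h
    simp [Fin.ext_iff]
    omega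

def adjB (m p : ℕ) (c : Fin p → Fin 4) : VV m p → VV m p → Bool
  | Sum.inl (i, j), Sum.inl (i', j') =>
      (decide (i = i') && (decide (j.val + 1 = j'.val) || decide (j'.val + 1 = j.val)))
      || (decide (j = j') && (decide (i.val + 1 = i'.val) || decide (i'.val + 1 = i.val)))
  | Sum.inl a, Sum.inr t => decide (corner m (c t) = a)
  | Sum.inr t, Sum.inl a => decide (corner m (c t) = a)
  | _, _ => false

lemma adjB_iff (m p : ℕ) (c : Fin p → Fin 4) (x y : VV m p) :
    (gridCorners m p c).Adj x y ↔ adjB m p c x y = true := by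
  rcases x with ⟨i, j⟩ | t <;> rcases y with ⟨i', j'⟩ | t'
  · simp only [gridCorners, SimpleGraph.fromRel_adj, adjB, grid2,
      SimpleGraph.boxProd_adj, SimpleGraph.pathGraph_adj, ne_eq, Sum.inl.injEq,
      Prod.mk.injEq, not_and, Bool.or_eq_true, Bool.and_eq_true,
      decide_eq_true_eq, Fin.ext_iff]
    constructor
    · rintro ⟨hne, h | h⟩ <;> omega
    · intro h
      have hi := i.isLt; have hi' := i'.isLt
      constructor
      · intro hii; omega
      · omega
  · simp [gridCorners, SimpleGraph.fromRel_adj, adjB]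
  · simp [gridCorners, SimpleGraph.fromRel_adj, adjB]
  · simp [gridCorners, SimpleGraph.fromRel_adj, adjB]

def edgeList (m p : ℕ) (c : Fin p → Fin 4) : List (VV m p × VV m p) :=
  ((vertsL m p).flatMap fun x => (vertsL m p).map fun y => (x, y)).filter
    fun q => adjB m p c q.1 q.2 && decide (encV m p q.1 < encV m p q.2)

lemma rep_edgeList (m p : ℕ) (c : Fin p → Fin 4) :
    ∀ x y : VV m p, (gridCorners m p c).Adj x y ↔
      ((x, y) ∈ edgeList m p c ∨ (y, x) ∈ edgeList m p c) := by
  intro x y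
  have hmem : ∀ a b : VV m p,
      (a, b) ∈ (vertsL m p).flatMap fun x => (vertsL m p).map fun y => (x, y) := by
    intro a b
    rw [List.mem_flatMap]
    exact ⟨a, mem_vertsL m p a, List.mem_map.mpr ⟨b, mem_vertsL m p b, rfl⟩⟩
  constructor
  · intro h
    have hb : adjB m p c x y = true := (adjB_iff m p c x y).mp h
    have hb' : adjB m p c y x = true := (adjB_iff m p c y x).mp h.symm
    have hne : encV m p x ≠ encV m p y := fun hh => h.ne (encV_inj m p hh)
    rcases Nat.lt_or_ge (encV m p x) (encV m p y) with hlt | hge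
    · left
      rw [edgeList, List.mem_filter]
      exact ⟨hmem x y, by simp [hb, hlt]⟩
    · right
      rw [edgeList, List.mem_filter]
      refine ⟨hmem y x, by simp [hb']; omega⟩
  · rintro (h | h) <;> rw [edgeList, List.mem_filter] at h
    · have := h.2
      simp only [Bool.and_eq_true] at this
      exact (adjB_iff m p c x y).mpr this.1
    · have := h.2
      simp only [Bool.and_eq_true] at this
      exact ((adjB_iff m p c y x).mpr this.1).symm



/-- For `k ∈ {0,1}`, the Arc Kayles positions on `G(2k+1)` (the 2×(2k+1) grid
graph with one pendant edge at each of three corners, for any choice of three of the four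
corners) and on `G⁺(2k+1)` (with one pendant edge at each of all four corners) each have
Grundy value 2 (game value `*2`). -/
theorem arc_kayles_G_odd_small (k : ℕ) (hk : k = 0 ∨ k = 1)
    (gAK : ∀ (V : Type), Fintype V → SimpleGraph V → ℕ)
    (hAK : ∀ (V : Type) (hV : Fintype V) (G : SimpleGraph V),
      gAK V hV G = mex {x | ∃ G', arcKaylesMove G G' ∧ x = gAK V hV G'}) :
    (∀ c : Fin 3 → Fin 4, Function.Injective c →
      gAK ((Fin 2 × Fin (2 * k + 1)) ⊕ Fin 3) inferInstance
        (gridCorners (2 * k) 3 c) = 2) ∧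
    gAK ((Fin 2 × Fin (2 * k + 1)) ⊕ Fin 4) inferInstance
      (gridCorners (2 * k) 4 (fun j => j)) = 2 := by
  have main : ∀ (m p : ℕ) (c : Fin p → Fin 4),
      (edgeList m p c).length ≤ 64 →
      grundyF 64 ((edgeList m p c).map (Prod.map (encV m p) (encV m p))) = 2 →
      gAK (VV m p) inferInstance (gridCorners m p c) = 2 := by
    intro m p c hlen hval
    have hkey := key (V := VV m p) inferInstance gAK hAK 64 (edgeList m p c)
      (gridCorners m p c) hlen (rep_edgeList m p c)
    rw [hkey, ← grundyF_map (encV m p) (encV_inj m p) 64, hval]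
  rcases hk with rfl | rfl
  · constructor
    · intro c hc
      have hdec : ∀ c : Fin 3 → Fin 4, Function.Injective c →
          (edgeList (2 * 0) 3 c).length ≤ 64 ∧
          grundyF 64 ((edgeList (2 * 0) 3 c).map
            (Prod.map (encV (2 * 0) 3) (encV (2 * 0) 3))) = 2 := by decide
      exact main (2 * 0) 3 c (hdec c hc).1 (hdec c hc).2
    · have hdec : (edgeList (2 * 0) 4 (fun j => j)).length ≤ 64 ∧
          grundyF 64 ((edgeList (2 * 0) 4 (fun j => j)).map
            (Prod.map (encV (2 * 0) 4) (encV (2 * 0) 4))) = 2 := by decide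
      exact main (2 * 0) 4 (fun j => j) hdec.1 hdec.2
  · constructor
    · intro c hc
      have hdec : ∀ c : Fin 3 → Fin 4, Function.Injective c →
          (edgeList (2 * 1) 3 c).length ≤ 64 ∧
          grundyF 64 ((edgeList (2 * 1) 3 c).map
            (Prod.map (encV (2 * 1) 3) (encV (2 * 1) 3))) = 2 := by decide
      exact main (2 * 1) 3 c (hdec c hc).1 (hdec c hc).2
    · have hdec : (edgeList (2 * 1) 4 (fun j => j)).length ≤ 64 ∧
          grundyF 64 ((edgeList (2 * 1) 4 (fun j => j)).map
            (Prod.map (encV (2 * 1) 4) (encV (2 * 1) 4))) = 2 := by decide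
      exact main (2 * 1) 4 (fun j => j) hdec.1 hdec.2
end
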